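/- arXiv:0708.1984 — 6 statements merged into one kernel-verified Lean document; each statement's English description precedes it below -/
import Mathlib

section
/- Let B be an infinite Boolean algebra and let λ be an infinite cardinal such that no set of ultrafilters of B of cardinality less than λ is dense in the Stone space of B. Then there exists a subset D of the product space Stone(B) × Stone(B) such that D has cardinality λ and D is discrete as a subspace (every point of D has an open neighborhood in Stone(B) × Stone(B) meeting D only in that point). -/
open Cardinal

universe u

/-- An ultrafilter of a Boolean algebra `B`: a proper filter containing,
for each `b : B`, either `b` or `bᶜ`. -/
structure BAUltrafilter (B : Type u) [BooleanAlgebra B] where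
  carrier : Set B
  top_mem : ⊤ ∈ carrier
  bot_not_mem : ⊥ ∉ carrier
  inf_mem : ∀ ⦃x y : B⦄, x ∈ carrier → y ∈ carrier → x ⊓ y ∈ carrier
  mem_of_le : ∀ ⦃x y : B⦄, x ∈ carrier → x ≤ y → y ∈ carrier
  mem_or_compl_mem : ∀ x : B, x ∈ carrier ∨ xᶜ ∈ carrier

instance (B : Type u) [BooleanAlgebra B] : Membership B (BAUltrafilter B) :=
  ⟨fun q b => b ∈ q.carrier⟩

/-- The Stone topology on the set of ultrafilters of `B`, generated by the
basic (clopen) sets `{q : b ∈ q}` for `b : B`. -/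
instance stoneTopology (B : Type u) [BooleanAlgebra B] :
    TopologicalSpace (BAUltrafilter B) :=
  TopologicalSpace.generateFrom {U | ∃ b : B, U = {q : BAUltrafilter B | b ∈ q}}

namespace DiscreteSquareProof

variable {B : Type u} [BooleanAlgebra B]

lemma ne_bot_of_mem {x : BAUltrafilter B} {b : B} (h : b ∈ x) : b ≠ ⊥ :=
  fun hb => x.bot_not_mem (hb ▸ h)

lemma compl_mem_of_not_mem {x : BAUltrafilter B} {b : B} (h : b ∉ x) : bᶜ ∈ x :=
  (x.mem_or_compl_mem b).resolve_left h

lemma not_mem_of_compl_mem {x : BAUltrafilter B} {b : B} (h : bᶜ ∈ x) : b ∉ x := by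
  intro h'
  have h2 : b ⊓ bᶜ ∈ x.carrier := x.inf_mem h' h
  rw [inf_compl_eq_bot] at h2
  exact x.bot_not_mem h2

lemma finset_inf_mem {α : Type*} {x : BAUltrafilter B} {f : α → B} {F : Finset α}
    (h : ∀ b ∈ F, f b ∈ x) : F.inf f ∈ x := by
  classical
  induction F using Finset.induction_on with
  | empty => rw [Finset.inf_empty]; exact x.top_mem
  | @insert a s ha ih =>
      rw [Finset.inf_insert]
      exact x.inf_mem (h a (Finset.mem_insert_self a s))
        (ih fun b hb => h b (Finset.mem_insert_of_mem hb))

/-- Ultrafilter extension: any family with the finite intersection property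
extends to an ultrafilter. -/
lemma exists_ultra {S : Set B} (hS : ∀ F : Finset B, ↑F ⊆ S → F.inf id ≠ ⊥) :
    ∃ x : BAUltrafilter B, ∀ s ∈ S, s ∈ x := by
  classical
  let P : Set B → Prop := fun G =>
    (⊤ ∈ G ∧ ⊥ ∉ G ∧ (∀ a ∈ G, ∀ b ∈ G, a ⊓ b ∈ G) ∧ ∀ a ∈ G, ∀ b, a ≤ b → b ∈ G) ∧ S ⊆ G
  -- the filter generated by `S`
  let F0 : Set B := {b | ∃ F : Finset B, ↑F ⊆ S ∧ F.inf id ≤ b}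
  have hF0 : P F0 := by
    refine ⟨⟨⟨∅, by simp, by simp⟩, ?_, ?_, ?_⟩, ?_⟩
    · rintro ⟨F, hFS, hle⟩
      exact hS F hFS (le_bot_iff.mp hle)
    · rintro a ⟨F₁, h₁, l₁⟩ b ⟨F₂, h₂, l₂⟩
      refine ⟨F₁ ∪ F₂, ?_, ?_⟩
      · rw [Finset.coe_union]; exact Set.union_subset h₁ h₂
      · rw [Finset.inf_union]; exact inf_le_inf l₁ l₂
    · rintro a ⟨F, hFS, hle⟩ b hab
      exact ⟨F, hFS, hle.trans hab⟩
    · intro s hs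
      refine ⟨{s}, by simpa using hs, by simp⟩
  have hchains : ∀ c ⊆ {G | P G}, IsChain (· ⊆ ·) c → c.Nonempty →
      ∃ ub ∈ {G | P G}, ∀ s ∈ c, s ⊆ ub := by
    intro c hc hchain hne
    obtain ⟨G₀, hG₀⟩ := hne
    refine ⟨⋃₀ c, ⟨⟨⟨G₀, hG₀, (hc hG₀).1.1⟩, ?_, ?_, ?_⟩, ?_⟩,
      fun s hs => Set.subset_sUnion_of_mem hs⟩
    · rintro ⟨G, hG, hbot⟩
      exact (hc hG).1.2.1 hbot
    · rintro a ⟨G₁, hG₁, ha⟩ b ⟨G₂, hG₂, hb⟩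
      rcases hchain.total hG₁ hG₂ with h | h
      · exact ⟨G₂, hG₂, (hc hG₂).1.2.2.1 a (h ha) b hb⟩
      · exact ⟨G₁, hG₁, (hc hG₁).1.2.2.1 a ha b (h hb)⟩
    · rintro a ⟨G, hG, ha⟩ b hab
      exact ⟨G, hG, (hc hG).1.2.2.2 a ha b hab⟩
    · intro s hs
      exact ⟨G₀, hG₀, (hc hG₀).2 hs⟩
  obtain ⟨M, hM0, hMmax⟩ := zorn_subset_nonempty {G | P G} hchains F0 hF0
  have hPM : P M := hMmax.1
  -- maximality gives ultrafilter property
  have hultra : ∀ b : B, b ∈ M ∨ bᶜ ∈ M := by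
    intro b
    by_contra hcon
    push_neg at hcon
    obtain ⟨hb, hbc⟩ := hcon
    have hcompat : ∀ m ∈ M, m ⊓ b ≠ ⊥ := by
      intro m hm h0
      have : m ≤ bᶜ := sdiff_eq_bot_iff.mp (by rwa [sdiff_eq, compl_compl])
      exact hbc (hPM.1.2.2.2 m hm bᶜ this)
    let M' : Set B := {c | ∃ m ∈ M, m ⊓ b ≤ c}
    have hPM' : P M' := by
      refine ⟨⟨⟨⊤, hPM.1.1, le_top⟩, ?_, ?_, ?_⟩, ?_⟩
      · rintro ⟨m, hm, hle⟩
        exact hcompat m hm (le_bot_iff.mp hle)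
      · rintro a ⟨m₁, hm₁, l₁⟩ c ⟨m₂, hm₂, l₂⟩
        refine ⟨m₁ ⊓ m₂, hPM.1.2.2.1 m₁ hm₁ m₂ hm₂, le_inf ?_ ?_⟩
        · exact le_trans (inf_le_inf_right b inf_le_left) l₁
        · exact le_trans (inf_le_inf_right b inf_le_right) l₂
      · rintro a ⟨m, hm, hle⟩ c hac
        exact ⟨m, hm, hle.trans hac⟩
      · intro s hs
        exact ⟨s, hPM.2 hs, inf_le_left⟩
    have hsub : M ⊆ M' := fun m hm => ⟨m, hm, inf_le_left⟩
    have : M' ⊆ M := hMmax.2 hPM' hsub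
    exact hb (this ⟨⊤, hPM.1.1, inf_le_right⟩)
  refine ⟨⟨M, hPM.1.1, hPM.1.2.1, ?_, ?_, hultra⟩, fun s hs => hM0 (hF0.2 hs)⟩
  · intro a b ha hb; exact hPM.1.2.2.1 a ha b hb
  · intro a b ha hab; exact hPM.1.2.2.2 a ha b hab

lemma exists_mem [Nontrivial B] {b : B} (hb : b ≠ ⊥) : ∃ x : BAUltrafilter B, b ∈ x := by
  have hfin : ∀ F : Finset B, ↑F ⊆ ({b} : Set B) → F.inf id ≠ ⊥ := by
    intro F hF
    have hFb : F ⊆ {b} := by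
      intro t ht
      have := hF (Finset.mem_coe.mpr ht)
      simpa using this
    rcases Finset.subset_singleton_iff.mp hFb with rfl | rfl
    · simp only [Finset.inf_empty, id]
      exact (top_ne_bot : (⊤ : B) ≠ ⊥)
    · simpa using hb
  obtain ⟨x, hx⟩ := exists_ultra hfin
  exact ⟨x, hx b rfl⟩

/-- Every open set containing `x` contains a basic clopen set containing `x`. -/
lemma exists_basic {U : Set (BAUltrafilter B)} (hU : IsOpen U) :
    ∀ x ∈ U, ∃ b : B, b ∈ x ∧ {q : BAUltrafilter B | b ∈ q} ⊆ U := by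
  have hU' : TopologicalSpace.GenerateOpen
      {V | ∃ b : B, V = {q : BAUltrafilter B | b ∈ q}} U := hU
  clear hU
  induction hU' with
  | basic V hV =>
      obtain ⟨b, rfl⟩ := hV
      exact fun x hx => ⟨b, hx, subset_rfl⟩
  | univ => exact fun x _ => ⟨⊤, x.top_mem, fun q _ => trivial⟩
  | inter U V hU1 hV1 ihU ihV =>
      intro x hx
      obtain ⟨b, hb, hbU⟩ := ihU x hx.1
      obtain ⟨c, hc, hcV⟩ := ihV x hx.2
      refine ⟨b ⊓ c, x.inf_mem hb hc, fun q hq => ⟨?_, ?_⟩⟩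
      · exact hbU (q.mem_of_le hq inf_le_left)
      · exact hcV (q.mem_of_le hq inf_le_right)
  | sUnion C hC ih =>
      rintro x ⟨V, hV, hxV⟩
      obtain ⟨b, hb, hbV⟩ := ih V hV x hxV
      exact ⟨b, hb, hbV.trans (Set.subset_sUnion_of_mem hV)⟩

/-- Translation of the non-density hypothesis: any small set of ultrafilters
avoids some nonzero element. -/
lemma avoid {lam : Cardinal.{u}}
    (hnotdense : ∀ Q : Set (BAUltrafilter B), #Q < lam → ¬ Dense Q)
    (Q : Set (BAUltrafilter B)) (hQ : #Q < lam) :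
    ∃ b : B, b ≠ ⊥ ∧ ∀ q ∈ Q, b ∉ q := by
  have h := hnotdense Q hQ
  rw [dense_iff_inter_open] at h
  push_neg at h
  obtain ⟨U, hUo, hUne, hUQ⟩ := h
  obtain ⟨x, hxU⟩ := hUne
  obtain ⟨b, hbx, hbU⟩ := exists_basic hUo x hxU
  refine ⟨b, ne_bot_of_mem hbx, fun q hq hbq => ?_⟩
  have : q ∈ U ∩ Q := ⟨hbU hbq, hq⟩
  rw [hUQ] at this
  exact this

lemma mk_finset_lt {α : Type u} {lam : Cardinal.{u}} (hlam : ℵ₀ ≤ lam) (hα : #α < lam) :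
    #(Finset α) < lam := by
  cases finite_or_infinite α with
  | inl h =>
      haveI := Fintype.ofFinite α
      exact lt_of_lt_of_le (Cardinal.lt_aleph0_of_finite _) hlam
  | inr h =>
      rw [Cardinal.mk_finset_of_infinite]
      exact hα

/-- The key step lemma: given fewer than `lam` ultrafilters `S` and elements `T`,
there are ultrafilters `x`, `y` and an element `u` with `u ∈ x`, `u ∉ y`,
`u` avoided by every member of `S`, and every `t ∈ T` belonging to `x` also
belongs to `y`. -/
lemma step [Nontrivial B] {lam : Cardinal.{u}} (hlam : ℵ₀ ≤ lam)
    (hav : ∀ Q : Set (BAUltrafilter B), #Q < lam → ∃ b : B, b ≠ ⊥ ∧ ∀ q ∈ Q, b ∉ q)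
    (S : Set (BAUltrafilter B)) (T : Set B) (hSc : #S < lam) (hTc : #T < lam) :
    ∃ (x y : BAUltrafilter B) (u : B),
      u ∈ x ∧ u ∉ y ∧ (∀ s ∈ S, u ∉ s) ∧ ∀ t ∈ T, t ∈ x → t ∈ y := by
  classical
  -- witnesses for the "cells" (finite infima of elements of T)
  have hw : ∀ F : Finset B, ∃ z : BAUltrafilter B, F.inf id ≠ ⊥ → F.inf id ∈ z := by
    intro F
    by_cases h : F.inf id = ⊥
    · obtain ⟨z, _⟩ := exists_mem (B := B) (top_ne_bot)
      exact ⟨z, fun h' => absurd h h'⟩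
    · obtain ⟨z, hz⟩ := exists_mem h
      exact ⟨z, fun _ => hz⟩
  choose w hwspec using hw
  set W : Set (BAUltrafilter B) := w '' {F : Finset B | ↑F ⊆ T} with hWdef
  have hWc : #W < lam := by
    have h1 : #W ≤ #{F : Finset B | ↑F ⊆ T} := Cardinal.mk_image_le
    have h2 : #{F : Finset B | ↑F ⊆ T} ≤ #(Finset T) := by
      refine Cardinal.mk_le_of_injective
        (f := fun F : {F : Finset B // ↑F ⊆ T} => F.1.subtype (· ∈ T)) ?_
      intro F₁ F₂ h
      have h1 := congrArg (Finset.map (Function.Embedding.subtype (· ∈ T))) h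
      rw [Finset.subtype_map, Finset.subtype_map,
        Finset.filter_true_of_mem (fun x hx => F₁.2 (Finset.mem_coe.mpr hx)),
        Finset.filter_true_of_mem (fun x hx => F₂.2 (Finset.mem_coe.mpr hx))] at h1
      exact Subtype.ext h1
    exact lt_of_le_of_lt (h1.trans h2) (mk_finset_lt hlam hTc)
  have hQc : #(S ∪ W : Set (BAUltrafilter B)) < lam :=
    lt_of_le_of_lt (Cardinal.mk_union_le _ _) (Cardinal.add_lt_of_lt hlam hSc hWc)
  obtain ⟨b₀, hb₀ne, hb₀Q⟩ := hav _ hQc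
  obtain ⟨x, hx⟩ := exists_mem hb₀ne
  -- key compatibility fact
  have key : ∀ F : Finset B, ↑F ⊆ T → (∀ t ∈ F, t ∈ x) → F.inf id ⊓ b₀ᶜ ≠ ⊥ := by
    intro F hFT hFx h0
    have hle : F.inf id ≤ b₀ := sdiff_eq_bot_iff.mp (by rwa [sdiff_eq])
    have hmem : F.inf id ∈ x := finset_inf_mem hFx
    have hne : F.inf id ≠ ⊥ := ne_bot_of_mem hmem
    have hb₀w : b₀ ∈ w F := (w F).mem_of_le (hwspec F hne) hle
    exact hb₀Q (w F) (Or.inr ⟨F, hFT, rfl⟩) hb₀w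
  -- build y
  set G : Set B := {t | t ∈ T ∧ t ∈ x} ∪ {b₀ᶜ} with hGdef
  have hGf : ∀ F : Finset B, ↑F ⊆ G → F.inf id ≠ ⊥ := by
    intro F hF h0
    set F₁ := F.filter (fun t => t ∈ T ∧ t ∈ x) with hF₁def
    have hsub : F ⊆ F₁ ∪ {b₀ᶜ} := by
      intro t ht
      rcases hF (Finset.mem_coe.mpr ht) with h | h
      · exact Finset.mem_union_left _ (Finset.mem_filter.mpr ⟨ht, h⟩)
      · exact Finset.mem_union_right _ (by simpa using h)
    have h1 : (F₁ ∪ {b₀ᶜ}).inf id ≤ F.inf id := Finset.inf_mono hsub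
    have h2 : (F₁ ∪ {b₀ᶜ}).inf id = F₁.inf id ⊓ b₀ᶜ := by
      rw [Finset.inf_union]; simp
    have h3 : F₁.inf id ⊓ b₀ᶜ ≠ ⊥ := by
      refine key F₁ ?_ ?_
      · intro t ht
        have := Finset.mem_filter.mp (Finset.mem_coe.mp ht)
        exact this.2.1
      · intro t ht
        exact (Finset.mem_filter.mp ht).2.2
    apply h3
    rw [← h2]
    exact le_bot_iff.mp (h0 ▸ h1)
  obtain ⟨y, hy⟩ := exists_ultra hGf
  refine ⟨x, y, b₀, hx, ?_, ?_, ?_⟩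
  · exact not_mem_of_compl_mem (hy _ (Or.inr rfl))
  · intro s hs hmem
    exact hb₀Q s (Or.inl hs) hmem
  · intro t ht htx
    exact hy t (Or.inl ⟨ht, htx⟩)

end DiscreteSquareProof

open DiscreteSquareProof in
/-- If `B` is an infinite Boolean algebra and `λ` is an infinite
cardinal such that no set of ultrafilters of `B` of cardinality `< λ` is dense
in the Stone space, then `Stone(B) × Stone(B)` has a discrete subspace of
cardinality `λ`. -/
theorem density_lt_implies_discrete_square (B : Type u) [BooleanAlgebra B] [Infinite B]
    (lam : Cardinal.{u}) (hlam : ℵ₀ ≤ lam)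
    (hnotdense : ∀ Q : Set (BAUltrafilter B), #Q < lam → ¬ Dense Q) :
    ∃ D : Set (BAUltrafilter B × BAUltrafilter B),
      #D = lam ∧
      ∀ p ∈ D, ∃ U : Set (BAUltrafilter B × BAUltrafilter B),
        IsOpen U ∧ U ∩ D = {p} := by
  classical
  have hav : ∀ Q : Set (BAUltrafilter B), #Q < lam → ∃ b : B, b ≠ ⊥ ∧ ∀ q ∈ Q, b ∉ q :=
    avoid hnotdense
  have hcard : ∀ β : (Cardinal.ord lam).ToType, #{γ : (Cardinal.ord lam).ToType // γ < β} < lam := by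
    intro β
    have h4 : #{γ : (Cardinal.ord lam).ToType // γ < β}
        = (@Ordinal.typein (Cardinal.ord lam).ToType (· < ·) isWellOrder_lt β).card :=
      @Ordinal.card_typein (Cardinal.ord lam).ToType (· < ·) isWellOrder_lt β
    rw [h4]
    exact Cardinal.lt_ord.mp (Ordinal.typein_lt_self β)
  -- step at stage β given past data
  have hstep : ∀ (β : (Cardinal.ord lam).ToType) (g : ∀ γ : (Cardinal.ord lam).ToType, γ < β → BAUltrafilter B × BAUltrafilter B × B),
      ∃ z : BAUltrafilter B × BAUltrafilter B × B,
        z.2.2 ∈ z.1 ∧ z.2.2 ∉ z.2.1 ∧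
        (∀ γ (h : γ < β), z.2.2 ∉ (g γ h).1 ∧ z.2.2 ∉ (g γ h).2.1) ∧
        (∀ γ (h : γ < β), (g γ h).2.2 ∈ z.1 → (g γ h).2.2 ∈ z.2.1) := by
    intro β g
    set S : Set (BAUltrafilter B) :=
      (Set.range fun γ : {γ : (Cardinal.ord lam).ToType // γ < β} => (g γ.1 γ.2).1) ∪
      (Set.range fun γ : {γ : (Cardinal.ord lam).ToType // γ < β} => (g γ.1 γ.2).2.1) with hSdef
    set T : Set B := Set.range fun γ : {γ : (Cardinal.ord lam).ToType // γ < β} => (g γ.1 γ.2).2.2 with hTdef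
    have hSc : #S < lam := by
      refine lt_of_le_of_lt (Cardinal.mk_union_le _ _)
        (Cardinal.add_lt_of_lt hlam ?_ ?_) <;>
        exact lt_of_le_of_lt Cardinal.mk_range_le (hcard β)
    have hTc : #T < lam := lt_of_le_of_lt Cardinal.mk_range_le (hcard β)
    obtain ⟨x, y, u, hux, huy, hS', hT'⟩ := step hlam hav S T hSc hTc
    refine ⟨(x, y, u), hux, huy, fun γ h => ⟨?_, ?_⟩, fun γ h hmem => ?_⟩
    · exact hS' _ (Or.inl ⟨⟨γ, h⟩, rfl⟩)
    · exact hS' _ (Or.inr ⟨⟨γ, h⟩, rfl⟩)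
    · exact hT' _ ⟨⟨γ, h⟩, rfl⟩ hmem
  -- transfinite recursion
  let f : (Cardinal.ord lam).ToType → BAUltrafilter B × BAUltrafilter B × B :=
    WellFounded.fix wellFounded_lt (fun β rec => Classical.choose (hstep β rec))
  have hf : ∀ β : (Cardinal.ord lam).ToType,
      (f β).2.2 ∈ (f β).1 ∧ (f β).2.2 ∉ (f β).2.1 ∧
      (∀ γ (h : γ < β), (f β).2.2 ∉ (f γ).1 ∧ (f β).2.2 ∉ (f γ).2.1) ∧
      (∀ γ (h : γ < β), (f γ).2.2 ∈ (f β).1 → (f γ).2.2 ∈ (f β).2.1) := by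
    intro β
    have heq : f β = Classical.choose (hstep β (fun γ _ => f γ)) :=
      WellFounded.fix_eq _ _ _
    rw [heq]
    exact Classical.choose_spec (hstep β (fun γ _ => f γ))
  -- assemble the discrete set
  let pt : (Cardinal.ord lam).ToType → BAUltrafilter B × BAUltrafilter B := fun β => ((f β).1, (f β).2.1)
  have hptinj : Function.Injective pt := by
    intro β γ h
    by_contra hne
    have hx : (f β).1 = (f γ).1 := (Prod.ext_iff.mp h).1
    rcases lt_or_gt_of_ne hne with hlt | hlt
    · exact ((hf γ).2.2.1 β hlt).1 (by rw [hx]; exact (hf γ).1)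
    · exact ((hf β).2.2.1 γ hlt).1 (by rw [← hx]; exact (hf β).1)
  refine ⟨Set.range pt, ?_, ?_⟩
  · rw [Cardinal.mk_range_eq pt hptinj]
    rw [Cardinal.mk_toType, Cardinal.card_ord]
  · rintro p ⟨β, rfl⟩
    refine ⟨{q : BAUltrafilter B | (f β).2.2 ∈ q} ×ˢ
      {q : BAUltrafilter B | ((f β).2.2)ᶜ ∈ q}, ?_, ?_⟩
    · refine IsOpen.prod ?_ ?_ <;>
        exact TopologicalSpace.isOpen_generateFrom_of_mem ⟨_, rfl⟩
    · rw [Set.eq_singleton_iff_unique_mem]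
      constructor
      · refine ⟨⟨(hf β).1, compl_mem_of_not_mem (hf β).2.1⟩, ⟨β, rfl⟩⟩
      · rintro r ⟨⟨h1, h2⟩, ⟨γ, rfl⟩⟩
        rcases lt_trichotomy γ β with hlt | heq | hlt
        · exact absurd h1 (((hf β).2.2.1 γ hlt).1)
        · rw [heq]
        · -- β < γ : both u_β and u_βᶜ would be in y_γ
          have h3 : (f β).2.2 ∈ (f γ).2.1 := (hf γ).2.2.2 β hlt h1
          have h4 : (f β).2.2 ⊓ ((f β).2.2)ᶜ ∈ ((f γ).2.1).carrier :=
            ((f γ).2.1).inf_mem h3 h2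
          rw [inf_compl_eq_bot] at h4
          exact absurd h4 ((f γ).2.1).bot_not_mem
end

section
/- Let B be an infinite Boolean algebra and let d(Stone(B)) denote the density of its Stone space, i.e. the least cardinality of a dense subset. Then there exists a discrete subspace of Stone(B) × Stone(B) whose cardinality equals d(Stone(B)). In particular, the spread of Stone(B) × Stone(B) (the supremum of cardinalities of its discrete subspaces) is at least the density of Stone(B). -/
open Cardinal
open scoped symmDiff

universe u

namespace StoneAux

variable {B : Type u} [BooleanAlgebra B]

theorem mem_iff {q : BAUltrafilter B} {b : B} : b ∈ q ↔ b ∈ q.carrier := Iff.rfl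

theorem ne_bot_of_mem {q : BAUltrafilter B} {x : B} (h : x ∈ q) : x ≠ ⊥ :=
  fun hx => q.bot_not_mem (hx ▸ h)

theorem not_mem_of_compl_mem {q : BAUltrafilter B} {x : B} (h : xᶜ ∈ q) : x ∉ q := fun hx =>
  q.bot_not_mem (by simpa using q.inf_mem hx h)

theorem compl_mem_iff {q : BAUltrafilter B} {x : B} : xᶜ ∈ q ↔ x ∉ q :=
  ⟨not_mem_of_compl_mem, fun hx => (q.mem_or_compl_mem x).resolve_left hx⟩

theorem mem_of_sup_mem {q : BAUltrafilter B} {x y : B} (h : x ⊔ y ∈ q) : x ∈ q ∨ y ∈ q := by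
  by_contra hc
  push_neg at hc
  have hx : xᶜ ∈ q := compl_mem_iff.2 hc.1
  have hy : yᶜ ∈ q := compl_mem_iff.2 hc.2
  have hb : (x ⊔ y) ⊓ (xᶜ ⊓ yᶜ) ∈ q := q.inf_mem h (q.inf_mem hx hy)
  have : (x ⊔ y) ⊓ (xᶜ ⊓ yᶜ) = ⊥ := by
    rw [← compl_sup, inf_compl_eq_bot]
  exact q.bot_not_mem (this ▸ hb)

theorem finset_inf_mem {q : BAUltrafilter B} {F : Finset B} (h : ∀ b ∈ F, b ∈ q) :
    F.inf id ∈ q := by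
  classical
  induction F using Finset.induction with
  | empty => simpa [Finset.inf_empty] using (show (⊤ : B) ∈ q from q.top_mem)
  | @insert a s ha ih =>
      rw [Finset.inf_insert]
      exact q.inf_mem (h a (Finset.mem_insert_self a s))
        (ih fun b hb => h b (Finset.mem_insert_of_mem hb))

/-- Finite intersection property. -/
def FIP (T : Set B) : Prop := ∀ F : Finset B, ↑F ⊆ T → F.inf id ≠ ⊥

theorem fip_insert {G : Set B} {x : B} (hG : FIP G)
    (h : ∀ F : Finset B, ↑F ⊆ G → F.inf id ⊓ x ≠ ⊥) : FIP (insert x G) := by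
  classical
  intro F hF
  have hF' : ↑(F.erase x) ⊆ G := by
    intro b hb
    simp only [Finset.coe_erase, Set.mem_diff, Set.mem_singleton_iff] at hb
    rcases hF hb.1 with h1 | h1
    · exact absurd h1 hb.2
    · exact h1
  have hle : (insert x (F.erase x)).inf id ≤ F.inf id := by
    apply Finset.inf_mono
    intro b hb
    by_cases hbx : b = x
    · rw [hbx]; exact Finset.mem_insert_self x _
    · exact Finset.mem_insert_of_mem (Finset.mem_erase.2 ⟨hbx, hb⟩)
  intro hbot
  apply h (F.erase x) hF'
  have : (insert x (F.erase x)).inf id = ⊥ := le_bot_iff.1 (hbot ▸ hle)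
  rw [Finset.inf_insert] at this
  rw [inf_comm] at this
  simpa [id] using this

theorem fip_singleton [Nontrivial B] {b : B} (hb : b ≠ ⊥) : FIP ({b} : Set B) := by
  intro F hF
  rcases Finset.subset_singleton_iff.1 (by exact_mod_cast hF) with rfl | rfl
  · simp
  · simpa using hb

theorem exists_ultra {T : Set B} (hT : FIP T) : ∃ u : BAUltrafilter B, T ⊆ u.carrier := by
  classical
  obtain ⟨G, hTG, hGfip, hGmax⟩ :
      ∃ G, T ⊆ G ∧ FIP G ∧ ∀ G', FIP G' → G ⊆ G' → G' = G := by
    obtain ⟨G, hTG, hGm⟩ := zorn_subset_nonempty {G : Set B | FIP G}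
      (fun c hc hchain hne => by
        refine ⟨⋃₀ c, ?_, fun s hs => Set.subset_sUnion_of_mem hs⟩
        intro F hF
        rw [Set.sUnion_eq_biUnion] at hF
        obtain ⟨i, hic, hFi⟩ :=
          DirectedOn.exists_mem_subset_of_finset_subset_biUnion hne
            (hchain.directedOn) hF
        exact hc hic F hFi) T hT
    exact ⟨G, hTG, hGm.1, fun G' h1 h2 => le_antisymm (hGm.2 h1 h2) h2⟩
  have mem_of_fip_insert : ∀ x : B, FIP (insert x G) → x ∈ G := by
    intro x h
    have := hGmax _ h (Set.subset_insert x G)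
    rw [← this]
    exact Set.mem_insert x G
  have hGinf : ∀ F : Finset B, ↑F ⊆ G → F.inf id ∈ G := by
    intro F hF
    apply mem_of_fip_insert
    apply fip_insert hGfip
    intro F' hF'
    have : ((F' ∪ F).inf id : B) = F'.inf id ⊓ F.inf id := Finset.inf_union
    rw [← this]
    exact hGfip _ (by rw [Finset.coe_union]; exact Set.union_subset hF' hF)
  refine ⟨⟨G, ?_, ?_, ?_, ?_, ?_⟩, hTG⟩
  · simpa using hGinf ∅ (by simp)
  · intro hbot
    exact hGfip {⊥} (by simpa using hbot) (by simp)
  · intro x y hx hy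
    have := hGinf {x, y} (by
      intro b hb
      simp only [Finset.coe_insert, Finset.coe_singleton, Set.mem_insert_iff,
        Set.mem_singleton_iff] at hb
      rcases hb with rfl | rfl <;> assumption)
    simpa using this
  · intro x y hx hxy
    apply mem_of_fip_insert
    apply fip_insert hGfip
    intro F hF hbot
    apply hGfip (insert x F) (by
      rw [Finset.coe_insert]; exact Set.insert_subset hx hF)
    rw [Finset.inf_insert]
    refine le_bot_iff.1 ?_
    calc (id x : B) ⊓ F.inf id ≤ F.inf id ⊓ y := by
          simp only [id]
          rw [inf_comm]
          exact inf_le_inf_left _ hxy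
      _ = ⊥ := hbot
  · intro x
    by_contra hc
    push_neg at hc
    obtain ⟨hx, hxc⟩ := hc
    have h1 : ¬ FIP (insert x G) := fun h => hx (mem_of_fip_insert x h)
    have h2 : ¬ FIP (insert xᶜ G) := fun h => hxc (mem_of_fip_insert xᶜ h)
    have key : ∀ z : B, ¬ FIP (insert z G) → ∃ F : Finset B, ↑F ⊆ G ∧ F.inf id ⊓ z = ⊥ := by
      intro z hz
      simp only [FIP, not_forall] at hz
      obtain ⟨F, hF, hFbot⟩ := hz
      rw [not_not] at hFbot
      have hF' : ↑(F.erase z) ⊆ G := by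
        intro b hb
        simp only [Finset.coe_erase, Set.mem_diff, Set.mem_singleton_iff] at hb
        rcases hF hb.1 with h1 | h1
        · exact absurd h1 hb.2
        · exact h1
      refine ⟨F.erase z, hF', ?_⟩
      have hle : (insert z (F.erase z)).inf id ≤ F.inf id := by
        apply Finset.inf_mono
        intro b hb
        by_cases hbz : b = z
        · rw [hbz]; exact Finset.mem_insert_self z _
        · exact Finset.mem_insert_of_mem (Finset.mem_erase.2 ⟨hbz, hb⟩)
      have : (insert z (F.erase z)).inf id = ⊥ := le_bot_iff.1 (hFbot ▸ hle)
      rw [Finset.inf_insert] at this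
      rw [inf_comm] at this
      simpa [id] using this
    obtain ⟨F1, hF1, hb1⟩ := key x h1
    obtain ⟨F2, hF2, hb2⟩ := key xᶜ h2
    apply hGfip (F1 ∪ F2) (by rw [Finset.coe_union]; exact Set.union_subset hF1 hF2)
    have hle1 : (F1 ∪ F2).inf id ≤ xᶜ := by
      have : F1.inf id ⊓ x = ⊥ := hb1
      have hx' : F1.inf id ≤ xᶜ :=
        le_compl_iff_disjoint_right.2 (disjoint_iff.2 this)
      calc (F1 ∪ F2).inf id ≤ F1.inf id := Finset.inf_mono Finset.subset_union_left
        _ ≤ xᶜ := hx'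
    have hle2 : (F1 ∪ F2).inf id ≤ x := by
      have : F2.inf id ⊓ xᶜ = ⊥ := hb2
      have hx' : F2.inf id ≤ x := by
        have h := le_compl_iff_disjoint_right.2 (disjoint_iff.2 this)
        simpa using h
      calc (F1 ∪ F2).inf id ≤ F2.inf id := Finset.inf_mono Finset.subset_union_right
        _ ≤ x := hx'
    exact le_bot_iff.1 (le_trans (le_inf hle2 hle1) (by simp))

theorem isBasis :
    TopologicalSpace.IsTopologicalBasis
      {U : Set (BAUltrafilter B) | ∃ b : B, U = {q | b ∈ q}} := by
  refine ⟨?_, ?_, rfl⟩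
  · rintro t1 ⟨b1, rfl⟩ t2 ⟨b2, rfl⟩ q ⟨h1, h2⟩
    refine ⟨{q | b1 ⊓ b2 ∈ q}, ⟨b1 ⊓ b2, rfl⟩, q.inf_mem h1 h2, ?_⟩
    intro p hp
    exact ⟨p.mem_of_le hp inf_le_left, p.mem_of_le hp inf_le_right⟩
  · apply Set.eq_univ_of_forall
    intro q
    exact ⟨{p | (⊤ : B) ∈ p}, ⟨⊤, rfl⟩, q.top_mem⟩

theorem isOpen_basic (b : B) : IsOpen {q : BAUltrafilter B | b ∈ q} :=
  TopologicalSpace.isOpen_generateFrom_of_mem ⟨b, rfl⟩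

theorem dense_iff' [Nontrivial B] {Q : Set (BAUltrafilter B)} :
    Dense Q ↔ ∀ b : B, b ≠ ⊥ → ∃ q ∈ Q, b ∈ q := by
  rw [isBasis.dense_iff]
  constructor
  · intro h b hb
    obtain ⟨u, hu⟩ := exists_ultra (fip_singleton hb)
    obtain ⟨q, hq, hqQ⟩ := h {p | b ∈ p} ⟨b, rfl⟩ ⟨u, hu rfl⟩
    exact ⟨q, hqQ, hq⟩
  · rintro h o ⟨b, rfl⟩ ⟨p, hp⟩
    obtain ⟨q, hqQ, hq⟩ := h b (ne_bot_of_mem hp)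
    exact ⟨q, hq, hqQ⟩

theorem exists_avoid_of_finite [Infinite B] {Q : Set (BAUltrafilter B)} (hQ : Q.Finite) :
    ∃ b : B, b ≠ ⊥ ∧ ∀ q ∈ Q, b ∉ q := by
  classical
  haveI := hQ.to_subtype
  obtain ⟨b, b', hne, heq⟩ :=
    Finite.exists_ne_map_eq_of_infinite (fun b : B => fun q : Q => decide (b ∈ q.1))
  refine ⟨b ∆ b', by rwa [Ne, symmDiff_eq_bot], ?_⟩
  intro q hq hmem
  have hiff : b ∈ q ↔ b' ∈ q := by
    have := congrFun heq ⟨q, hq⟩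
    simpa [decide_eq_decide] using this
  rw [symmDiff_def] at hmem
  rcases mem_of_sup_mem hmem with h | h
  · have hb : b ∈ q := q.mem_of_le h sdiff_le
    have hb' : b' ∉ q := not_mem_of_compl_mem (q.mem_of_le h (by rw [sdiff_eq]; exact inf_le_right))
    exact hb' (hiff.1 hb)
  · have hb : b' ∈ q := q.mem_of_le h sdiff_le
    have hb' : b ∉ q := not_mem_of_compl_mem (q.mem_of_le h (by rw [sdiff_eq]; exact inf_le_right))
    exact hb' (hiff.2 hb)

section Step

variable [Nontrivial B] {κ : Cardinal.{u}}

theorem step (hinf : ℵ₀ ≤ κ)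
    (hmin : ∀ Q : Set (BAUltrafilter B), Dense Q → κ ≤ #Q)
    (J : Type u) (hJ : #J < κ) (a : J → B) (qf rf : J → BAUltrafilter B) :
    ∃ x : B × BAUltrafilter B × BAUltrafilter B,
      x.1 ∈ x.2.1 ∧ x.1 ∉ x.2.2 ∧ (∀ γ, x.1 ∉ qf γ ∧ x.1 ∉ rf γ) ∧
      (∀ γ, a γ ∈ x.2.1 → a γ ∈ x.2.2) := by
  classical
  -- the set of earlier points is not dense
  have hPlt : #(↥(Set.range qf ∪ Set.range rf)) < κ := by
    refine lt_of_le_of_lt (Cardinal.mk_union_le _ _) ?_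
    exact Cardinal.add_lt_of_lt hinf
      (lt_of_le_of_lt Cardinal.mk_range_le hJ)
      (lt_of_le_of_lt Cardinal.mk_range_le hJ)
  obtain ⟨b₀, hb₀, hb₀avoid⟩ :
      ∃ b : B, b ≠ ⊥ ∧ ∀ γ, b ∉ qf γ ∧ b ∉ rf γ := by
    have hnd : ¬ Dense (Set.range qf ∪ Set.range rf) := fun h =>
      absurd (hmin _ h) (not_le.2 hPlt)
    rw [dense_iff'] at hnd
    push_neg at hnd
    obtain ⟨b, hb, h⟩ := hnd
    exact ⟨b, hb, fun γ =>
      ⟨h _ (Set.mem_union_left _ ⟨γ, rfl⟩), h _ (Set.mem_union_right _ ⟨γ, rfl⟩)⟩⟩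
  by_cases hA : ∃ b : B, (b ≠ ⊥ ∧ ∀ γ, b ∉ qf γ ∧ b ∉ rf γ) ∧ ∃ q : BAUltrafilter B,
      b ∈ q ∧ FIP ({x | ∃ γ, a γ = x ∧ x ∈ q} ∪ {bᶜ})
  · obtain ⟨b, ⟨hb, havoid⟩, q, hbq, hfip⟩ := hA
    obtain ⟨r, hr⟩ := exists_ultra hfip
    refine ⟨⟨b, q, r⟩, hbq, ?_, havoid, ?_⟩
    · exact not_mem_of_compl_mem (hr (Set.mem_union_right _ rfl))
    · intro γ hγ
      exact hr (Set.mem_union_left _ ⟨γ, rfl, hγ⟩)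
  · -- contradiction with minimality of κ
    exfalso
    push_neg at hA
    -- for each finset σ of J with nonzero inf, pick an ultrafilter containing the inf
    have hU : ∀ σ : Finset J, σ.inf a ≠ ⊥ →
        ∃ u : BAUltrafilter B, σ.inf a ∈ u := by
      intro σ hσ
      obtain ⟨u, hu⟩ := exists_ultra (fip_singleton hσ)
      exact ⟨u, hu rfl⟩
    obtain ⟨u₀⟩ : Nonempty (BAUltrafilter B) := by
      obtain ⟨u, _⟩ := exists_ultra (fip_singleton (top_ne_bot (α := B)))
      exact ⟨u⟩
    let u : Finset J → BAUltrafilter B := fun σ =>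
      if h : σ.inf a ≠ ⊥ then Classical.choose (hU σ h) else u₀
    have hu : ∀ σ : Finset J, σ.inf a ≠ ⊥ → σ.inf a ∈ u σ := by
      intro σ h
      simp only [u, dif_pos h]
      exact Classical.choose_spec (hU σ h)
    set D' : Set (BAUltrafilter B) :=
      (Set.range qf ∪ Set.range rf) ∪ Set.range u with hD'
    have hD'lt : #(↥D') < κ := by
      refine lt_of_le_of_lt (Cardinal.mk_union_le _ _) ?_
      refine Cardinal.add_lt_of_lt hinf hPlt ?_
      refine lt_of_le_of_lt Cardinal.mk_range_le ?_
      rcases finite_or_infinite J with hfin | hinfJ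
      · haveI := Fintype.ofFinite J
        exact lt_of_lt_of_le (Cardinal.lt_aleph0_of_finite _) hinf
      · rwa [Cardinal.mk_finset_of_infinite]
    have hD'dense : Dense D' := by
      rw [dense_iff']
      intro b hb
      by_cases hbS : ∀ γ, b ∉ qf γ ∧ b ∉ rf γ
      · -- b is avoided by all earlier ultrafilters; use case-B analysis
        obtain ⟨q, hq⟩ := exists_ultra (fip_singleton hb)
        have hbq : b ∈ q := hq rfl
        have hnfip := hA b ⟨hb, hbS⟩ q hbq
        simp only [FIP, not_forall] at hnfip
        obtain ⟨F, hF, hFbot⟩ := hnfip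
        rw [not_not] at hFbot
        -- F ⊆ {a γ ∈ q} ∪ {bᶜ}
        set F' : Finset B := F.erase bᶜ with hF'def
        have hF' : ∀ x ∈ F', ∃ γ, a γ = x ∧ x ∈ q := by
          intro x hx
          have hx1 := Finset.mem_of_mem_erase hx
          have hx2 := Finset.ne_of_mem_erase hx
          rcases hF hx1 with h | h
          · exact h
          · exact absurd h hx2
        have hmq : F'.inf id ∈ q := finset_inf_mem (fun x hx => by
          obtain ⟨γ, h1, h2⟩ := hF' x hx; exact h2)
        have hm_ne : F'.inf id ≠ ⊥ := ne_bot_of_mem hmq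
        have hmb : F'.inf id ≤ b := by
          have hle : (insert bᶜ F').inf id ≤ F.inf id := by
            apply Finset.inf_mono
            intro x hx
            by_cases hxb : x = bᶜ
            · rw [hxb]; exact Finset.mem_insert_self _ _
            · exact Finset.mem_insert_of_mem (Finset.mem_erase.2 ⟨hxb, hx⟩)
          have hbot : (insert bᶜ F').inf id = ⊥ := le_bot_iff.1 (hFbot ▸ hle)
          rw [Finset.inf_insert] at hbot
          have : F'.inf id ⊓ bᶜ = ⊥ := by
            rw [inf_comm] at hbot
            simpa [id] using hbot
          have h2 := le_compl_iff_disjoint_right.2 (disjoint_iff.2 this)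
          simpa using h2
        -- build σ : Finset J
        let pick : ∀ x ∈ F', J := fun x hx => Classical.choose (hF' x hx)
        have hpick : ∀ x (hx : x ∈ F'), a (pick x hx) = x :=
          fun x hx => (Classical.choose_spec (hF' x hx)).1
        set σ : Finset J := F'.attach.image (fun x => pick x.1 x.2) with hσdef
        have hσinf : σ.inf a = F'.inf id := by
          apply le_antisymm
          · apply Finset.le_inf
            intro x hx
            have hmem : pick x hx ∈ σ := by
              rw [hσdef]
              exact Finset.mem_image.2 ⟨⟨x, hx⟩, F'.mem_attach _, rfl⟩
            have := Finset.inf_le hmem (f := a)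
            rwa [hpick x hx] at this
          · apply Finset.le_inf
            intro γ hγ
            rw [hσdef] at hγ
            obtain ⟨x, _, rfl⟩ := Finset.mem_image.1 hγ
            rw [hpick x.1 x.2]
            exact Finset.inf_le x.2
        have hσ_ne : σ.inf a ≠ ⊥ := by rw [hσinf]; exact hm_ne
        have : b ∈ u σ := (u σ).mem_of_le (hu σ hσ_ne) (hσinf ▸ hmb)
        exact ⟨u σ, Set.mem_union_right _ ⟨σ, rfl⟩, this⟩
      · push_neg at hbS
        obtain ⟨γ, hγ⟩ := hbS
        by_cases h : b ∈ qf γ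
        · exact ⟨qf γ, Set.mem_union_left _ (Set.mem_union_left _ ⟨γ, rfl⟩), h⟩
        · refine ⟨rf γ, Set.mem_union_left _ (Set.mem_union_right _ ⟨γ, rfl⟩), ?_⟩
          rcases hγ h with h'
          exact h'
    exact absurd (hmin D' hD'dense) (not_le.2 hD'lt)

theorem key (hinf : ℵ₀ ≤ κ)
    (hmin : ∀ Q : Set (BAUltrafilter B), Dense Q → κ ≤ #Q) :
    ∃ D : Set (BAUltrafilter B × BAUltrafilter B),
      (∀ p ∈ D, ∃ U : Set (BAUltrafilter B × BAUltrafilter B),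
          IsOpen U ∧ U ∩ D = {p}) ∧ #D = κ := by
  classical
  set I := κ.ord.ToType with hI
  have hJi : ∀ i : I, #{j : I // j < i} < κ := fun i => Cardinal.mk_Iio_ord_toType i
  have wf : WellFounded ((· < ·) : I → I → Prop) := wellFounded_lt
  let Fn : ∀ i : I, (∀ j, j < i → B × BAUltrafilter B × BAUltrafilter B) →
      B × BAUltrafilter B × BAUltrafilter B := fun i rec =>
    Classical.choose (step hinf hmin {j : I // j < i} (hJi i)
      (fun j => (rec j.1 j.2).1) (fun j => (rec j.1 j.2).2.1) (fun j => (rec j.1 j.2).2.2))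
  let f : I → B × BAUltrafilter B × BAUltrafilter B := wf.fix Fn
  have hfix : ∀ i, f i = Fn i (fun j _ => f j) := fun i => wf.fix_eq Fn i
  have hspec : ∀ i : I,
      (f i).1 ∈ (f i).2.1 ∧ (f i).1 ∉ (f i).2.2 ∧
      (∀ j : {j : I // j < i}, (f i).1 ∉ (f j.1).2.1 ∧ (f i).1 ∉ (f j.1).2.2) ∧
      (∀ j : {j : I // j < i}, (f j.1).1 ∈ (f i).2.1 → (f j.1).1 ∈ (f i).2.2) := by
    intro i
    have h := Classical.choose_spec (step hinf hmin {j : I // j < i} (hJi i)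
      (fun j => (f j.1).1) (fun j => (f j.1).2.1) (fun j => (f j.1).2.2))
    rw [hfix i]
    exact h
  let g : I → BAUltrafilter B × BAUltrafilter B := fun i => ((f i).2.1, (f i).2.2)
  have hglt : ∀ i j : I, j < i → g i ≠ g j := by
    intro i j hj h
    have h1 : (f i).1 ∈ (f i).2.1 := (hspec i).1
    have h2 : (f i).1 ∉ (f j).2.1 := ((hspec i).2.2.1 ⟨j, hj⟩).1
    apply h2
    have heq : (f i).2.1 = (f j).2.1 := congrArg Prod.fst h
    rwa [heq] at h1
  have hginj : Function.Injective g := by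
    intro i j h
    rcases lt_trichotomy i j with hij | hij | hij
    · exact absurd h.symm (hglt j i hij)
    · exact hij
    · exact absurd h (hglt i j hij)
  refine ⟨Set.range g, ?_, ?_⟩
  · rintro p ⟨i, rfl⟩
    refine ⟨{x : BAUltrafilter B | (f i).1 ∈ x} ×ˢ {y : BAUltrafilter B | (f i).1ᶜ ∈ y},
      IsOpen.prod (isOpen_basic _) (isOpen_basic _), ?_⟩
    apply Set.eq_singleton_iff_unique_mem.2
    constructor
    · refine ⟨?_, ⟨i, rfl⟩⟩
      rw [Set.mem_prod]
      exact ⟨(hspec i).1, compl_mem_iff.2 (hspec i).2.1⟩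
    · rintro x ⟨hxU, j, rfl⟩
      rw [Set.mem_prod] at hxU
      obtain ⟨hq, hr⟩ := hxU
      have hr' : (f i).1 ∉ (f j).2.2 := not_mem_of_compl_mem hr
      have hji : j = i := by
        rcases lt_trichotomy j i with hij | hij | hij
        · exact absurd hq ((hspec i).2.2.1 ⟨j, hij⟩).1
        · exact hij
        · exact absurd ((hspec j).2.2.2 ⟨i, hij⟩ hq) hr'
      rw [hji]
  · rw [Cardinal.mk_range_eq g hginj, hI, Cardinal.mk_ord_toType]

end Step

end StoneAux

/-- For an infinite Boolean algebra `B`, there is a discrete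
subspace of `Stone(B) × Stone(B)` whose cardinality equals the density
`d(Stone(B))` (the least cardinality of a dense subset of the Stone space);
in particular the spread of `Stone(B) × Stone(B)` is at least `d(Stone(B))`. -/
theorem density_le_spread_of_square (B : Type u) [BooleanAlgebra B] [Infinite B] :
    (∃ D : Set (BAUltrafilter B × BAUltrafilter B),
        (∀ p ∈ D, ∃ U : Set (BAUltrafilter B × BAUltrafilter B),
            IsOpen U ∧ U ∩ D = {p}) ∧
        #D = sInf {κ : Cardinal.{u} | ∃ Q : Set (BAUltrafilter B), Dense Q ∧ #Q = κ}) ∧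
    sInf {κ : Cardinal.{u} | ∃ Q : Set (BAUltrafilter B), Dense Q ∧ #Q = κ} ≤
      sSup {κ : Cardinal.{u} | ∃ D : Set (BAUltrafilter B × BAUltrafilter B),
        (∀ p ∈ D, ∃ U : Set (BAUltrafilter B × BAUltrafilter B),
            IsOpen U ∧ U ∩ D = {p}) ∧ #D = κ} := by
  classical
  have hne : {κ : Cardinal.{u} | ∃ Q : Set (BAUltrafilter B), Dense Q ∧ #Q = κ}.Nonempty :=
    ⟨#(Set.univ : Set (BAUltrafilter B)), Set.univ, dense_univ, rfl⟩
  have hmin : ∀ Q : Set (BAUltrafilter B), Dense Q →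
      sInf {κ : Cardinal.{u} | ∃ Q : Set (BAUltrafilter B), Dense Q ∧ #Q = κ} ≤ #Q :=
    fun Q hQ => csInf_le' ⟨Q, hQ, rfl⟩
  have hinf : ℵ₀ ≤ sInf {κ : Cardinal.{u} | ∃ Q : Set (BAUltrafilter B), Dense Q ∧ #Q = κ} := by
    refine le_csInf hne ?_
    rintro c ⟨Q, hQ, rfl⟩
    by_contra hlt
    rw [not_le, Cardinal.lt_aleph0_iff_set_finite] at hlt
    obtain ⟨b, hb, havoid⟩ := StoneAux.exists_avoid_of_finite hlt
    rw [StoneAux.dense_iff'] at hQ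
    obtain ⟨q, hq, hbq⟩ := hQ b hb
    exact havoid q hq hbq
  obtain ⟨D, hD, hcard⟩ := StoneAux.key hinf hmin
  refine ⟨⟨D, hD, hcard⟩, ?_⟩
  refine le_csSup ?_ ⟨D, hD, hcard⟩
  refine ⟨#(BAUltrafilter B × BAUltrafilter B), ?_⟩
  rintro c ⟨E, _, rfl⟩
  exact Cardinal.mk_set_le E
end

section
/- Let B be a Boolean algebra, C a Boolean subalgebra of B, and a ∈ B with a ∉ C. Then the set I = {c ∈ C : there exist b₀, b₁ ∈ C with c ≤ b₀ ⊔ b₁, b₀ ⊓ a = ⊥, and b₁ ⊓ aᶜ = ⊥} is a proper ideal of C; that is, I is downward closed in C, closed under finite joins, contains ⊥, and does not contain ⊤. -/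
universe u

/-- If `C` is a Boolean subalgebra of `B` and `a ∈ B` with `a ∉ C`,
then `I = {c ∈ C : ∃ b₀ b₁ ∈ C, c ≤ b₀ ⊔ b₁, b₀ ⊓ a = ⊥, b₁ ⊓ aᶜ = ⊥}` is a
proper ideal of `C`: it contains `⊥`, is downward closed in `C`, is closed
under finite joins, and does not contain `⊤`. -/
theorem proper_ideal_of_not_mem_subalgebra (B : Type u) [BooleanAlgebra B]
    (C : Set B) (hbot : ⊥ ∈ C) (htop : ⊤ ∈ C)
    (hinf : ∀ x ∈ C, ∀ y ∈ C, x ⊓ y ∈ C)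
    (hsup : ∀ x ∈ C, ∀ y ∈ C, x ⊔ y ∈ C)
    (hcompl : ∀ x ∈ C, xᶜ ∈ C)
    (a : B) (ha : a ∉ C) :
    let I : Set B :=
      {c | c ∈ C ∧ ∃ b₀ ∈ C, ∃ b₁ ∈ C, c ≤ b₀ ⊔ b₁ ∧ b₀ ⊓ a = ⊥ ∧ b₁ ⊓ aᶜ = ⊥}
    ⊥ ∈ I ∧
    (∀ c ∈ C, ∀ d ∈ I, c ≤ d → c ∈ I) ∧
    (∀ c ∈ I, ∀ d ∈ I, c ⊔ d ∈ I) ∧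
    ⊤ ∉ I := by
  intro I
  refine ⟨⟨hbot, ⊥, hbot, ⊥, hbot, by simp, by simp, by simp⟩, ?_, ?_, ?_⟩
  · rintro c hc d ⟨hdC, b₀, hb₀, b₁, hb₁, hle, h0, h1⟩ hcd
    exact ⟨hc, b₀, hb₀, b₁, hb₁, hcd.trans hle, h0, h1⟩
  · rintro c ⟨hcC, b₀, hb₀, b₁, hb₁, hle, h0, h1⟩ d ⟨hdC, b₀', hb₀', b₁', hb₁', hle', h0', h1'⟩
    refine ⟨hsup c hcC d hdC, b₀ ⊔ b₀', hsup _ hb₀ _ hb₀', b₁ ⊔ b₁', hsup _ hb₁ _ hb₁', ?_, ?_, ?_⟩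
    · calc c ⊔ d ≤ (b₀ ⊔ b₁) ⊔ (b₀' ⊔ b₁') := sup_le_sup hle hle'
        _ = (b₀ ⊔ b₀') ⊔ (b₁ ⊔ b₁') := by ac_rfl
    · rw [inf_sup_right, h0, h0']; simp
    · rw [inf_sup_right, h1, h1']; simp
  · rintro ⟨-, b₀, hb₀, b₁, hb₁, hle, h0, h1⟩
    apply ha
    have hb₀a : b₀ ≤ aᶜ := le_compl_iff_disjoint_right.2 (disjoint_iff.2 h0)
    have hb₁a : b₁ ≤ a := by
      have := le_compl_iff_disjoint_right.2 (disjoint_iff.2 h1)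
      simpa using this
    have htop' : b₀ ⊔ b₁ = ⊤ := top_le_iff.1 hle
    have hab : a = b₀ᶜ := by
      apply le_antisymm
      · simpa using compl_le_compl hb₀a
      · have h2 : b₀ᶜ ≤ b₁ := by
          have : b₀ᶜ = b₀ᶜ ⊓ (b₀ ⊔ b₁) := by rw [htop', inf_top_eq]
          rw [this, inf_sup_left, compl_inf_self, bot_sup_eq]
          exact inf_le_right
        exact h2.trans hb₁a
    rw [hab]
    exact hcompl _ hb₀
end

section
/- Let B be a Boolean algebra, C a Boolean subalgebra of B, and a ∈ B with a ∉ C. Then there exists an ultrafilter q of the Boolean algebra C such that for every b ∈ q one has b ⊓ a ≠ ⊥ and b ⊓ aᶜ ≠ ⊥ (the meets computed in B). -/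
universe u

/-- `q` is an ultrafilter of the Boolean subalgebra `C` of `B`: a proper filter
on `C` containing, for each `c ∈ C`, either `c` or `cᶜ`. -/
def IsUltrafilterIn {B : Type u} [BooleanAlgebra B] (C : Set B) (q : Set B) : Prop :=
  q ⊆ C ∧ ⊤ ∈ q ∧ ⊥ ∉ q ∧
  (∀ x ∈ q, ∀ y ∈ q, x ⊓ y ∈ q) ∧
  (∀ x ∈ q, ∀ y ∈ C, x ≤ y → y ∈ q) ∧
  (∀ c ∈ C, c ∈ q ∨ cᶜ ∈ q)

/-- A proper filter on the subalgebra `C`. -/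
def IsFilterIn {B : Type u} [BooleanAlgebra B] (C : Set B) (q : Set B) : Prop :=
  q ⊆ C ∧ ⊤ ∈ q ∧ ⊥ ∉ q ∧
  (∀ x ∈ q, ∀ y ∈ q, x ⊓ y ∈ q) ∧
  (∀ x ∈ q, ∀ y ∈ C, x ≤ y → y ∈ q)

lemma le_compl_of_inf_eq_bot {B : Type u} [BooleanAlgebra B] {x y : B}
    (h : x ⊓ y = ⊥) : x ≤ yᶜ :=
  le_compl_iff_disjoint_right.2 (disjoint_iff.2 h)

/-- Every proper filter on `C` extends to an ultrafilter on `C`. -/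
lemma exists_isUltrafilterIn_superset {B : Type u} [BooleanAlgebra B]
    (C : Set B) (htop : ⊤ ∈ C)
    (hinf : ∀ x ∈ C, ∀ y ∈ C, x ⊓ y ∈ C)
    (hcompl : ∀ x ∈ C, xᶜ ∈ C)
    (F : Set B) (hF : IsFilterIn C F) :
    ∃ q : Set B, F ⊆ q ∧ IsUltrafilterIn C q := by
  have hchainub : ∀ ch ⊆ {q : Set B | IsFilterIn C q}, IsChain (· ⊆ ·) ch → ch.Nonempty →
      ∃ ub ∈ {q : Set B | IsFilterIn C q}, ∀ s ∈ ch, s ⊆ ub := by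
    rintro ch hchS hchain ⟨t, ht⟩
    refine ⟨⋃₀ ch, ⟨?_, ?_, ?_, ?_, ?_⟩, fun s hs => Set.subset_sUnion_of_mem hs⟩
    · rintro x ⟨s, hs, hxs⟩
      exact (hchS hs).1 hxs
    · exact ⟨t, ht, (hchS ht).2.1⟩
    · rintro ⟨s, hs, hbs⟩
      exact (hchS hs).2.2.1 hbs
    · rintro x ⟨s, hs, hxs⟩ y ⟨s', hs', hys'⟩
      rcases hchain.total hs hs' with h | h
      · exact ⟨s', hs', (hchS hs').2.2.2.1 x (h hxs) y hys'⟩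
      · exact ⟨s, hs, (hchS hs).2.2.2.1 x hxs y (h hys')⟩
    · rintro x ⟨s, hs, hxs⟩ y hyC hxy
      exact ⟨s, hs, (hchS hs).2.2.2.2 x hxs y hyC hxy⟩
  obtain ⟨m, hFm, hmax⟩ :=
    zorn_subset_nonempty {q : Set B | IsFilterIn C q} hchainub F hF
  obtain ⟨hmC, hmtop, hmbot, hminf, hmup⟩ := hmax.prop
  · refine ⟨m, hFm, hmC, hmtop, hmbot, hminf, hmup, ?_⟩
    intro c hc
    by_cases hcm : c ∈ m
    · exact Or.inl hcm
    right
    -- consider the filter generated by m and c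
    set m' : Set B := {y | y ∈ C ∧ ∃ b ∈ m, b ⊓ c ≤ y} with hm'
    have hsub : m ⊆ m' := fun y hy => ⟨hmC hy, y, hy, inf_le_left⟩
    have hcm' : c ∈ m' := ⟨hc, ⊤, hmtop, inf_le_right⟩
    by_cases hbotm' : ⊥ ∈ m'
    · obtain ⟨-, b, hb, hble⟩ := hbotm'
      have : b ≤ cᶜ := le_compl_of_inf_eq_bot (le_bot_iff.1 hble)
      exact hmup b hb cᶜ (hcompl c hc) this
    · -- m' is a proper filter, contradicting maximality
      exfalso
      have hm'fil : IsFilterIn C m' := by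
        refine ⟨fun y hy => hy.1, ⟨htop, ⊤, hmtop, le_top⟩, hbotm', ?_, ?_⟩
        · rintro x ⟨hxC, b₁, hb₁, h₁⟩ y ⟨hyC, b₂, hb₂, h₂⟩
          exact ⟨hinf x hxC y hyC, b₁ ⊓ b₂, hminf b₁ hb₁ b₂ hb₂,
            le_inf (le_trans (inf_le_inf_right c inf_le_left) h₁)
                   (le_trans (inf_le_inf_right c inf_le_right) h₂)⟩
        · rintro x ⟨hxC, b, hb, hle⟩ y hyC hxy
          exact ⟨hyC, b, hb, hle.trans hxy⟩
      have := hmax.le_of_ge hm'fil hsub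
      exact hcm (this hcm')

/-- If `C` is a Boolean subalgebra of `B` and `a ∈ B \ C`, then
there is an ultrafilter `q` of `C` such that every `b ∈ q` meets both `a` and
`aᶜ` nontrivially (meets computed in `B`). -/
theorem exists_ultrafilter_meeting_both (B : Type u) [BooleanAlgebra B]
    (C : Set B) (hbot : ⊥ ∈ C) (htop : ⊤ ∈ C)
    (hinf : ∀ x ∈ C, ∀ y ∈ C, x ⊓ y ∈ C)
    (hsup : ∀ x ∈ C, ∀ y ∈ C, x ⊔ y ∈ C)
    (hcompl : ∀ x ∈ C, xᶜ ∈ C)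
    (a : B) (ha : a ∉ C) :
    ∃ q : Set B, IsUltrafilterIn C q ∧ ∀ b ∈ q, b ⊓ a ≠ ⊥ ∧ b ⊓ aᶜ ≠ ⊥ := by
  classical
  by_contra hcon
  push_neg at hcon
  -- every ultrafilter of C contains some b with b ≤ a or b ≤ aᶜ
  set S : Set B := {c | c ∈ C ∧ (c ≤ a ∨ c ≤ aᶜ)} with hS
  -- Step 1: some finite subset of S has supremum ⊤
  have hfin : ∃ T : Finset B, ↑T ⊆ S ∧ T.sup id = ⊤ := by
    by_contra hTc
    push_neg at hTc
    set F : Set B := {x | x ∈ C ∧ ∃ T : Finset B, ↑T ⊆ S ∧ (T.sup id)ᶜ ≤ x} with hFdef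
    have hFfil : IsFilterIn C F := by
      refine ⟨fun x hx => hx.1, ⟨htop, ∅, by simp, by simp⟩, ?_, ?_, ?_⟩
      · rintro ⟨-, T, hTS, hle⟩
        exact hTc T hTS (top_le_iff.1 (by simpa only [compl_bot, compl_compl] using compl_le_compl hle))
      · rintro x ⟨hxC, T₁, hT₁, h₁⟩ y ⟨hyC, T₂, hT₂, h₂⟩
        refine ⟨hinf x hxC y hyC, T₁ ∪ T₂, ?_, ?_⟩
        · rw [Finset.coe_union]
          exact Set.union_subset hT₁ hT₂
        · rw [Finset.sup_union, compl_sup]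
          exact le_inf (inf_le_left.trans h₁) (inf_le_right.trans h₂)
      · rintro x ⟨hxC, T, hTS, hle⟩ y hyC hxy
        exact ⟨hyC, T, hTS, hle.trans hxy⟩
    obtain ⟨q, hFq, hq⟩ := exists_isUltrafilterIn_superset C htop hinf hcompl F hFfil
    obtain ⟨hqC, hqtop, hqbot, hqinf, hqup, hqult⟩ := hq
    obtain ⟨b, hbq, hb⟩ := hcon q ⟨hqC, hqtop, hqbot, hqinf, hqup, hqult⟩
    have hbS : b ∈ S := by
      refine ⟨hqC hbq, ?_⟩
      by_cases h1 : b ⊓ a = ⊥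
      · exact Or.inr (le_compl_of_inf_eq_bot h1)
      · have := hb h1
        exact Or.inl (by simpa using le_compl_of_inf_eq_bot this)
    have hbcF : bᶜ ∈ F := by
      refine ⟨hcompl b (hqC hbq), {b}, by simpa using hbS, by simp⟩
    exact hqbot (by simpa using hqinf b hbq bᶜ (hFq hbcF))
  -- Step 2: then a is a finite sup of elements of C, contradiction
  obtain ⟨T, hTS, hTtop⟩ := hfin
  have hEq : a = (T.filter (· ≤ a)).sup id := by
    apply le_antisymm
    · have h2 : a ≤ T.sup fun t => a ⊓ id t := by
        rw [← Finset.sup_inf_distrib_left, hTtop, inf_top_eq]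
      refine le_trans h2 (Finset.sup_le fun t ht => ?_)
      rcases (hTS ht).2 with h | h
      · exact le_trans inf_le_right
          (Finset.le_sup (f := id) (Finset.mem_filter.2 ⟨ht, h⟩))
      · have hb : a ⊓ id t = ⊥ :=
          le_bot_iff.1 ((inf_le_inf_left a h).trans (by simp))
        rw [hb]
        exact bot_le
    · exact Finset.sup_le fun t ht => (Finset.mem_filter.1 ht).2
  refine ha ?_
  rw [hEq]
  exact Finset.sup_mem C hbot (fun x hx y hy => hsup x hx y hy) _ _
    (fun t ht => (hTS (Finset.mem_filter.1 ht).1).1)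
end

section
/- Let B be a Boolean algebra, C a Boolean subalgebra of B, and a ∈ B with a ∉ C. Then there exist ultrafilters p⁰ and p¹ of B such that aᶜ ∈ p⁰, a ∈ p¹, and for every c ∈ C one has c ∈ p⁰ if and only if c ∈ p¹ (that is, p⁰ and p¹ have the same trace on C). -/
open Cardinal

universe u

section Aux

variable {B : Type u} [BooleanAlgebra B]

/-- Proper filter predicate. -/
def IsPF (F : Set B) : Prop :=
  ⊤ ∈ F ∧ ⊥ ∉ F ∧ (∀ ⦃x y : B⦄, x ∈ F → y ∈ F → x ⊓ y ∈ F) ∧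
    (∀ ⦃x y : B⦄, x ∈ F → x ≤ y → y ∈ F)

lemma le_of_inf_compl_eq_bot {x y : B} (h : x ⊓ yᶜ = ⊥) : x ≤ y := by
  have : x = x ⊓ y ⊔ x ⊓ yᶜ := by rw [← inf_sup_left, sup_compl_eq_top, inf_top_eq]
  rw [h, sup_bot_eq] at this
  rw [this]; exact inf_le_right

lemma compl_le_of_inf_eq_bot {x y : B} (h : x ⊓ y = ⊥) : x ≤ yᶜ :=
  le_of_inf_compl_eq_bot (by rwa [compl_compl])

/-- Every proper filter extends to an ultrafilter. -/
lemma exists_ultra {F : Set B} (hF : IsPF F) :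
    ∃ U : BAUltrafilter B, F ⊆ U.carrier := by
  have chainH : ∀ c ⊆ {G : Set B | IsPF G ∧ F ⊆ G}, IsChain (· ⊆ ·) c → c.Nonempty →
      ∃ ub ∈ {G : Set B | IsPF G ∧ F ⊆ G}, ∀ s ∈ c, s ⊆ ub := by
    intro c hc hchain hne
    refine ⟨⋃₀ c, ⟨⟨?_, ?_, ?_, ?_⟩, ?_⟩, fun s hs => Set.subset_sUnion_of_mem hs⟩
    · obtain ⟨G, hG⟩ := hne
      exact ⟨G, hG, (hc hG).1.1⟩
    · rintro ⟨G, hG, hbG⟩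
      exact (hc hG).1.2.1 hbG
    · rintro x y ⟨G, hG, hx⟩ ⟨G', hG', hy⟩
      rcases hchain.total hG hG' with h | h
      · exact ⟨G', hG', (hc hG').1.2.2.1 (h hx) hy⟩
      · exact ⟨G, hG, (hc hG).1.2.2.1 hx (h hy)⟩
    · rintro x y ⟨G, hG, hx⟩ hxy
      exact ⟨G, hG, (hc hG).1.2.2.2 hx hxy⟩
    · obtain ⟨G, hG⟩ := hne
      exact (hc hG).2.trans (Set.subset_sUnion_of_mem hG)
  obtain ⟨M, hFM, hM⟩ := zorn_subset_nonempty _ chainH F ⟨hF, subset_rfl⟩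
  obtain ⟨⟨htopM, hbotM, hinfM, hupM⟩, _⟩ := hM.prop
  refine ⟨⟨M, htopM, hbotM, hinfM, hupM, ?_⟩, hFM⟩
  intro x
  by_contra hx
  push_neg at hx
  obtain ⟨hx1, hx2⟩ := hx
  -- for z with z ∉ M, adding z to M gives a non-proper filter, so some m ⊓ z = ⊥
  have key : ∀ z : B, z ∉ M → ∃ m ∈ M, m ⊓ z = ⊥ := by
    intro z hz
    by_contra hno
    push_neg at hno
    set Mz : Set B := {y | ∃ m ∈ M, m ⊓ z ≤ y} with hMz
    have hMzPF : IsPF Mz := by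
      refine ⟨⟨⊤, htopM, le_top⟩, ?_, ?_, ?_⟩
      · rintro ⟨m, hm, hle⟩
        exact hno m hm (le_bot_iff.mp hle)
      · rintro p q ⟨m, hm, hle⟩ ⟨m', hm', hle'⟩
        exact ⟨m ⊓ m', hinfM hm hm', le_inf
          (le_trans (inf_le_inf_right z inf_le_left) hle)
          (le_trans (inf_le_inf_right z inf_le_right) hle')⟩
      · rintro p q ⟨m, hm, hle⟩ hpq
        exact ⟨m, hm, hle.trans hpq⟩
    have hsub : M ⊆ Mz := fun m hm => ⟨m, hm, inf_le_left⟩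
    have : Mz ⊆ M := hM.2 ⟨hMzPF, hFM.trans hsub⟩ hsub
    exact hz (this ⟨⊤, htopM, by simpa using le_refl z⟩)
  obtain ⟨m, hm, hmx⟩ := key x hx1
  obtain ⟨m', hm', hmx'⟩ := key xᶜ hx2
  have : m ⊓ m' = ⊥ := by
    have h1 : m ⊓ m' = (m ⊓ m') ⊓ x ⊔ (m ⊓ m') ⊓ xᶜ := by
      rw [← inf_sup_left, sup_compl_eq_top, inf_top_eq]
    have h2 : (m ⊓ m') ⊓ x ≤ ⊥ := hmx ▸ inf_le_inf_right x inf_le_left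
    have h3 : (m ⊓ m') ⊓ xᶜ ≤ ⊥ := hmx' ▸ inf_le_inf_right xᶜ inf_le_right
    exact le_bot_iff.mp (h1.le.trans (sup_le h2 h3))
  exact hbotM (this ▸ hinfM hm hm')

end Aux

/-- If `C` is a Boolean subalgebra of `B` and `a ∈ B \ C`, then
there are ultrafilters `p⁰, p¹` of `B` with `aᶜ ∈ p⁰`, `a ∈ p¹`, having the
same trace on `C`. -/
theorem exists_ultrafilters_same_trace (B : Type u) [BooleanAlgebra B]
    (C : Set B) (hbot : ⊥ ∈ C) (htop : ⊤ ∈ C)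
    (hinf : ∀ x ∈ C, ∀ y ∈ C, x ⊓ y ∈ C)
    (hsup : ∀ x ∈ C, ∀ y ∈ C, x ⊔ y ∈ C)
    (hcompl : ∀ x ∈ C, xᶜ ∈ C)
    (a : B) (ha : a ∉ C) :
    ∃ p0 p1 : BAUltrafilter B,
      aᶜ ∈ p0 ∧ a ∈ p1 ∧ ∀ c ∈ C, (c ∈ p0 ↔ c ∈ p1) := by
  classical
  -- the base filter on C: upward closure of complements of (d₁ ⊔ d₂) with d₁ ≤ a, d₂ ≤ aᶜ
  set G0 : Set B :=
    {y | y ∈ C ∧ ∃ d₁ ∈ C, ∃ d₂ ∈ C, d₁ ≤ a ∧ d₂ ≤ aᶜ ∧ (d₁ ⊔ d₂)ᶜ ≤ y} with hG0def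
  -- the collection of "traced filters" compatible with both a and aᶜ
  set P : Set (Set B) :=
    {G | G ⊆ C ∧ G0 ⊆ G ∧ (∀ x ∈ G, ∀ y ∈ G, x ⊓ y ∈ G) ∧
      (∀ x ∈ G, ∀ y ∈ C, x ≤ y → y ∈ G) ∧ ∀ y ∈ G, y ⊓ a ≠ ⊥ ∧ y ⊓ aᶜ ≠ ⊥} with hPdef
  have htopG0 : ⊤ ∈ G0 := ⟨htop, ⊥, hbot, ⊥, hbot, bot_le, bot_le, le_top⟩
  have hG0P : G0 ∈ P := by
    refine ⟨fun y hy => hy.1, subset_rfl, ?_, ?_, ?_⟩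
    · rintro x ⟨hxC, d₁, hd₁C, d₂, hd₂C, hd₁a, hd₂a, hdx⟩
        y ⟨hyC, e₁, he₁C, e₂, he₂C, he₁a, he₂a, hey⟩
      refine ⟨hinf x hxC y hyC, d₁ ⊔ e₁, hsup d₁ hd₁C e₁ he₁C,
        d₂ ⊔ e₂, hsup d₂ hd₂C e₂ he₂C, sup_le hd₁a he₁a, sup_le hd₂a he₂a, le_inf ?_ ?_⟩
      · exact le_trans (compl_le_compl (sup_le
          (le_sup_of_le_left le_sup_left) (le_sup_of_le_right le_sup_left))) hdx
      · exact le_trans (compl_le_compl (sup_le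
          (le_sup_of_le_left le_sup_right) (le_sup_of_le_right le_sup_right))) hey
    · rintro x ⟨hxC, d₁, hd₁C, d₂, hd₂C, hd₁a, hd₂a, hdx⟩ y hyC hxy
      exact ⟨hyC, d₁, hd₁C, d₂, hd₂C, hd₁a, hd₂a, hdx.trans hxy⟩
    · rintro y ⟨hyC, d₁, hd₁C, d₂, hd₂C, hd₁a, hd₂a, hdy⟩
      constructor
      · intro hya
        -- y ≤ aᶜ, so ⊤ = d₁ ⊔ d₂ ⊔ y ≤ d₁ ⊔ aᶜ, forcing a = d₁ ∈ C
        have hyac : y ≤ aᶜ := compl_le_of_inf_eq_bot hya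
        have htop' : (⊤ : B) ≤ d₁ ⊔ aᶜ := by
          calc (⊤ : B) = (d₁ ⊔ d₂) ⊔ (d₁ ⊔ d₂)ᶜ := (sup_compl_eq_top).symm
          _ ≤ (d₁ ⊔ d₂) ⊔ y := sup_le_sup_left hdy _
          _ ≤ d₁ ⊔ aᶜ := sup_le (sup_le le_sup_left (le_sup_of_le_right hd₂a))
              (le_sup_of_le_right hyac)
        have : a ≤ d₁ := by
          have h1 : a = a ⊓ (d₁ ⊔ aᶜ) := by
            rw [inf_eq_left.mpr (le_top.trans htop')]
          have h2 : a ⊓ (d₁ ⊔ aᶜ) = a ⊓ d₁ := by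
            rw [inf_sup_left, inf_compl_eq_bot, sup_bot_eq]
          rw [h1, h2]; exact inf_le_right
        exact ha (le_antisymm this hd₁a ▸ hd₁C)
      · intro hya
        have hyac : y ≤ a := le_of_inf_compl_eq_bot hya
        have htop' : (⊤ : B) ≤ d₂ ⊔ a := by
          calc (⊤ : B) = (d₁ ⊔ d₂) ⊔ (d₁ ⊔ d₂)ᶜ := (sup_compl_eq_top).symm
          _ ≤ (d₁ ⊔ d₂) ⊔ y := sup_le_sup_left hdy _
          _ ≤ d₂ ⊔ a := sup_le (sup_le (le_sup_of_le_right hd₁a) le_sup_left)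
              (le_sup_of_le_right hyac)
        have haeq : aᶜ ≤ d₂ := by
          have h1 : aᶜ = aᶜ ⊓ (d₂ ⊔ a) := by
            rw [inf_eq_left.mpr (le_top.trans htop')]
          have h2 : aᶜ ⊓ (d₂ ⊔ a) = aᶜ ⊓ d₂ := by
            rw [inf_sup_left, compl_inf_eq_bot, sup_bot_eq]
          rw [h1, h2]; exact inf_le_right
        have heq : a = d₂ᶜ := by rw [le_antisymm hd₂a haeq, compl_compl]
        exact ha (heq ▸ hcompl d₂ hd₂C)
  -- Zorn: a maximal element q of P
  have chainH : ∀ c ⊆ P, IsChain (· ⊆ ·) c → c.Nonempty →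
      ∃ ub ∈ P, ∀ s ∈ c, s ⊆ ub := by
    intro c hc hchain hne
    obtain ⟨G, hG⟩ := hne
    refine ⟨⋃₀ c, ⟨?_, (hc hG).2.1.trans (Set.subset_sUnion_of_mem hG), ?_, ?_, ?_⟩,
      fun s hs => Set.subset_sUnion_of_mem hs⟩
    · rintro y ⟨G', hG', hy⟩
      exact (hc hG').1 hy
    · rintro x ⟨G1, hG1, hx⟩ y ⟨G2, hG2, hy⟩
      rcases hchain.total hG1 hG2 with h | h
      · exact ⟨G2, hG2, (hc hG2).2.2.1 x (h hx) y hy⟩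
      · exact ⟨G1, hG1, (hc hG1).2.2.1 x hx y (h hy)⟩
    · rintro x ⟨G', hG', hx⟩ y hyC hxy
      exact ⟨G', hG', (hc hG').2.2.2.1 x hx y hyC hxy⟩
    · rintro y ⟨G', hG', hy⟩
      exact (hc hG').2.2.2.2 y hy
  obtain ⟨q, hG0q, hq⟩ := zorn_subset_nonempty P chainH G0 hG0P
  obtain ⟨hqC, hG0q', hqinf, hqup, hqcompat⟩ := hq.prop
  have htopq : ⊤ ∈ q := hG0q htopG0
  -- q decides every element of C
  have hdec : ∀ c ∈ C, c ∈ q ∨ cᶜ ∈ q := by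
    intro c hcC
    by_contra hcd
    push_neg at hcd
    obtain ⟨hc1, hc2⟩ := hcd
    have key : ∀ z ∈ C, z ∉ q → ∃ m ∈ q, m ⊓ z ⊓ a = ⊥ ∨ m ⊓ z ⊓ aᶜ = ⊥ := by
      intro z hzC hz
      by_contra hno
      push_neg at hno
      set Qz : Set B := {y | y ∈ C ∧ ∃ m ∈ q, m ⊓ z ≤ y} with hQz
      have hQzP : Qz ∈ P := by
        refine ⟨fun y hy => hy.1, ?_, ?_, ?_, ?_⟩
        · intro y hy
          exact ⟨hqC (hG0q hy), y, hG0q hy, inf_le_left⟩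
        · rintro x ⟨hxC, m, hm, hmx⟩ y ⟨hyC, m', hm', hmy⟩
          refine ⟨hinf x hxC y hyC, m ⊓ m', hqinf m hm m' hm', le_inf ?_ ?_⟩
          · exact le_trans (inf_le_inf_right z inf_le_left) hmx
          · exact le_trans (inf_le_inf_right z inf_le_right) hmy
        · rintro x ⟨hxC, m, hm, hmx⟩ y hyC hxy
          exact ⟨hyC, m, hm, hmx.trans hxy⟩
        · rintro y ⟨hyC, m, hm, hmy⟩
          obtain ⟨h1, h2⟩ := hno m hm
          constructor
          · intro hya
            exact h1 (le_bot_iff.mp (hya ▸ inf_le_inf_right a hmy))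
          · intro hya
            exact h2 (le_bot_iff.mp (hya ▸ inf_le_inf_right aᶜ hmy))
      have hsub : q ⊆ Qz := fun m hm => ⟨hqC hm, m, hm, inf_le_left⟩
      have : Qz ⊆ q := hq.2 hQzP hsub
      exact hz (this ⟨hzC, ⊤, htopq, by simpa using le_refl z⟩)
    obtain ⟨m, hm, hmc⟩ := key c hcC hc1
    obtain ⟨m', hm', hmc'⟩ := key cᶜ (hcompl c hcC) hc2
    set n := m ⊓ m' with hn
    have hnq : n ∈ q := hqinf m hm m' hm'
    have hnC : n ∈ C := hqC hnq
    have h1 : n ⊓ c ⊓ a = ⊥ ∨ n ⊓ c ⊓ aᶜ = ⊥ := by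
      rcases hmc with h | h
      · exact Or.inl (le_bot_iff.mp (h ▸ inf_le_inf_right a
          (inf_le_inf_right c inf_le_left)))
      · exact Or.inr (le_bot_iff.mp (h ▸ inf_le_inf_right aᶜ
          (inf_le_inf_right c inf_le_left)))
    have h2 : n ⊓ cᶜ ⊓ a = ⊥ ∨ n ⊓ cᶜ ⊓ aᶜ = ⊥ := by
      rcases hmc' with h | h
      · exact Or.inl (le_bot_iff.mp (h ▸ inf_le_inf_right a
          (inf_le_inf_right cᶜ inf_le_right)))
      · exact Or.inr (le_bot_iff.mp (h ▸ inf_le_inf_right aᶜ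
          (inf_le_inf_right cᶜ inf_le_right)))
    -- helper: membership of nᶜ in G0 from d₁ ≤ a, d₂ ≤ aᶜ with d₁ ⊔ d₂ = n
    have hbotq : (⊥ : B) ∉ q := fun h => (hqcompat ⊥ h).1 (bot_inf_eq a)
    have hsplit : n ⊓ c ⊔ n ⊓ cᶜ = n := by
      rw [← inf_sup_left, sup_compl_eq_top, inf_top_eq]
    have hmixed : ∀ d₁ d₂ : B, d₁ ∈ C → d₂ ∈ C → d₁ ≤ a → d₂ ≤ aᶜ →
        d₁ ⊔ d₂ = n → False := by
      intro d₁ d₂ hd₁C hd₂C hd₁ hd₂ hdn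
      have hnG0 : nᶜ ∈ G0 := ⟨hcompl n hnC, d₁, hd₁C, d₂, hd₂C, hd₁, hd₂,
        by rw [hdn]⟩
      have : (⊥ : B) ∈ q := by
        have := hqinf n hnq nᶜ (hG0q hnG0)
        rwa [inf_compl_eq_bot] at this
      exact hbotq this
    rcases h1 with h1 | h1 <;> rcases h2 with h2 | h2
    · -- n ⊓ a = ⊥
      refine (hqcompat n hnq).1 ?_
      have : n ⊓ a = (n ⊓ c ⊔ n ⊓ cᶜ) ⊓ a := by rw [hsplit]
      rw [this, inf_sup_right, h1, h2, sup_bot_eq]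
    · -- n⊓c ≤ aᶜ, n⊓cᶜ ≤ a
      exact hmixed (n ⊓ cᶜ) (n ⊓ c) (hinf n hnC cᶜ (hcompl c hcC))
        (hinf n hnC c hcC) (le_of_inf_compl_eq_bot h2) (compl_le_of_inf_eq_bot h1)
        (by rw [sup_comm, hsplit])
    · -- n⊓c ≤ a, n⊓cᶜ ≤ aᶜ
      exact hmixed (n ⊓ c) (n ⊓ cᶜ) (hinf n hnC c hcC)
        (hinf n hnC cᶜ (hcompl c hcC)) (le_of_inf_compl_eq_bot h1)
        (compl_le_of_inf_eq_bot h2) hsplit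
    · -- n ⊓ aᶜ = ⊥
      refine (hqcompat n hnq).2 ?_
      have : n ⊓ aᶜ = (n ⊓ c ⊔ n ⊓ cᶜ) ⊓ aᶜ := by rw [hsplit]
      rw [this, inf_sup_right, h1, h2, sup_bot_eq]
  -- extend q ∪ {aᶜ} and q ∪ {a} to ultrafilters
  have hF : ∀ b : B, (∀ m ∈ q, m ⊓ b ≠ ⊥) →
      ∃ U : BAUltrafilter B, b ∈ U ∧ ∀ m ∈ q, m ∈ U := by
    intro b hb
    have hPF : IsPF {y : B | ∃ m ∈ q, m ⊓ b ≤ y} := by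
      refine ⟨⟨⊤, htopq, le_top⟩, ?_, ?_, ?_⟩
      · rintro ⟨m, hm, hle⟩
        exact hb m hm (le_bot_iff.mp hle)
      · rintro x y ⟨m, hm, hle⟩ ⟨m', hm', hle'⟩
        exact ⟨m ⊓ m', hqinf m hm m' hm', le_inf
          (le_trans (inf_le_inf_right b inf_le_left) hle)
          (le_trans (inf_le_inf_right b inf_le_right) hle')⟩
      · rintro x y ⟨m, hm, hle⟩ hxy
        exact ⟨m, hm, hle.trans hxy⟩
    obtain ⟨U, hU⟩ := exists_ultra hPF
    exact ⟨U, hU ⟨⊤, htopq, by simpa using le_refl b⟩,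
      fun m hm => hU ⟨m, hm, inf_le_left⟩⟩
  obtain ⟨p0, hp0a, hp0q⟩ := hF aᶜ (fun m hm => (hqcompat m hm).2)
  obtain ⟨p1, hp1a, hp1q⟩ := hF a (fun m hm => (hqcompat m hm).1)
  refine ⟨p0, p1, hp0a, hp1a, ?_⟩
  intro c hcC
  rcases hdec c hcC with h | h
  · exact iff_of_true (hp0q c h) (hp1q c h)
  · have h0 : c ∉ p0 := fun hc => p0.bot_not_mem
      (inf_compl_eq_bot (a := c) ▸ p0.inf_mem hc (hp0q cᶜ h))
    have h1 : c ∉ p1 := fun hc => p1.bot_not_mem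
      (inf_compl_eq_bot (a := c) ▸ p1.inf_mem hc (hp1q cᶜ h))
    exact iff_of_false h0 h1
end

section
/- Let B be an infinite Boolean algebra and λ an infinite cardinal such that no set of ultrafilters of B of cardinality less than λ is dense in the Stone space of B. Then there exist elements a_i ∈ B and ultrafilters p⁰_i, p¹_i of B, for i < λ, such that: (a) a_i ∈ p¹_i and a_i ∉ p⁰_i for every i < λ; (b) for all j < i < λ, a_j ∈ p⁰_i if and only if a_j ∈ p¹_i; (c) for all j < i < λ, a_i ∉ p⁰_j and a_i ∉ p¹_j. -/
open Cardinal

universe u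

section Aux

variable {B : Type u} [BooleanAlgebra B]

theorem BAUltrafilter.not_mem_of_compl_mem {q : BAUltrafilter B} {b : B}
    (h : bᶜ ∈ q.carrier) : b ∉ q.carrier := fun hb =>
  q.bot_not_mem (by simpa using q.inf_mem hb h)

/-- Every proper filter extends to an ultrafilter. -/
theorem exists_ultra_ext (F : Set B) (htop : ⊤ ∈ F) (hbot : ⊥ ∉ F)
    (hinf : ∀ ⦃x y : B⦄, x ∈ F → y ∈ F → x ⊓ y ∈ F)
    (hup : ∀ ⦃x y : B⦄, x ∈ F → x ≤ y → y ∈ F) :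
    ∃ p : BAUltrafilter B, F ⊆ p.carrier := by
  classical
  set T : Set (Set B) := {G | F ⊆ G ∧ ⊤ ∈ G ∧ ⊥ ∉ G ∧
    (∀ ⦃x y : B⦄, x ∈ G → y ∈ G → x ⊓ y ∈ G) ∧
    (∀ ⦃x y : B⦄, x ∈ G → x ≤ y → y ∈ G)} with hT
  have hFT : F ∈ T := ⟨subset_rfl, htop, hbot, hinf, hup⟩
  have hchainub : ∀ c ⊆ T, IsChain (· ⊆ ·) c → c.Nonempty →
      ∃ ub ∈ T, ∀ s ∈ c, s ⊆ ub := by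
    intro c hcT hchain hcne
    obtain ⟨G0, hG0⟩ := hcne
    refine ⟨⋃₀ c, ⟨?_, ⟨G0, hG0, (hcT hG0).2.1⟩, ?_, ?_, ?_⟩, fun s hs => Set.subset_sUnion_of_mem hs⟩
    · exact (hcT hG0).1.trans (Set.subset_sUnion_of_mem hG0)
    · rintro ⟨G, hGc, hbG⟩
      exact (hcT hGc).2.2.1 hbG
    · rintro x y ⟨G1, hG1, hxG1⟩ ⟨G2, hG2, hyG2⟩
      rcases hchain.total hG1 hG2 with h | h
      · exact ⟨G2, hG2, (hcT hG2).2.2.2.1 (h hxG1) hyG2⟩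
      · exact ⟨G1, hG1, (hcT hG1).2.2.2.1 hxG1 (h hyG2)⟩
    · rintro x y ⟨G1, hG1, hxG1⟩ hxy
      exact ⟨G1, hG1, (hcT hG1).2.2.2.2 hxG1 hxy⟩
  obtain ⟨M, hFM, hMT, hmax⟩ : ∃ M, F ⊆ M ∧ M ∈ T ∧ ∀ G ∈ T, M ⊆ G → G ⊆ M := by
    obtain ⟨M, hFM, hM⟩ := zorn_subset_nonempty T hchainub F hFT
    exact ⟨M, hFM, hM.prop, fun G hG hMG => hM.2 hG hMG⟩
  obtain ⟨_, hMtop, hMbot, hMinf, hMup⟩ := hMT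
  refine ⟨⟨M, hMtop, hMbot, hMinf, hMup, ?_⟩, hFM⟩
  intro x
  by_contra hx
  push_neg at hx
  obtain ⟨hx1, hx2⟩ := hx
  set G : Set B := {y | ∃ m ∈ M, m ⊓ x ≤ y} with hG
  have hMG : M ⊆ G := fun m hm => ⟨m, hm, inf_le_left⟩
  by_cases hbG : ⊥ ∈ G
  · obtain ⟨m, hm, hmx⟩ := hbG
    have : m ≤ xᶜ := by
      rw [le_compl_iff_disjoint_right, disjoint_iff]
      exact le_antisymm hmx bot_le
    exact hx2 (hMup hm this)
  · have hGT : G ∈ T := by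
      refine ⟨hFM.trans hMG, hMG hMtop, hbG, ?_, ?_⟩
      · rintro a b ⟨m1, hm1, h1⟩ ⟨m2, hm2, h2⟩
        refine ⟨m1 ⊓ m2, hMinf hm1 hm2, ?_⟩
        calc m1 ⊓ m2 ⊓ x ≤ (m1 ⊓ x) ⊓ (m2 ⊓ x) := by
              simp only [le_inf_iff, inf_le_left, inf_le_right, and_true, true_and]
              constructor
              · exact inf_le_of_left_le inf_le_left
              · exact inf_le_of_left_le inf_le_right
          _ ≤ a ⊓ b := inf_le_inf h1 h2
      · rintro a b ⟨m, hm, h1⟩ hab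
        exact ⟨m, hm, h1.trans hab⟩
    have hxG : x ∈ G := ⟨⊤, hMtop, by simpa using le_rfl⟩
    exact hx1 (hmax G hGT hMG hxG)

variable [Nontrivial B]

/-- Every nonzero element lies in some ultrafilter. -/
theorem exists_ultra_mem' (m : B) : ∃ p : BAUltrafilter B, m ≠ ⊥ → m ∈ p.carrier := by
  by_cases hm : m = ⊥
  · obtain ⟨p, _⟩ := exists_ultra_ext (B := B) {y | ⊤ ≤ y} le_rfl
      (by simp) (fun x y hx hy => le_inf hx hy) (fun x y hx hxy => hx.trans hxy)
    exact ⟨p, fun h => absurd hm h⟩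
  · obtain ⟨p, hp⟩ := exists_ultra_ext (B := B) {y | m ≤ y} le_top
      (fun h => hm (le_antisymm h bot_le)) (fun x y hx hy => le_inf hx hy)
      (fun x y hx hxy => hx.trans hxy)
    exact ⟨p, fun _ => hp le_rfl⟩

/-- Characterization of open sets in the Stone topology. -/
theorem stone_open_char {U : Set (BAUltrafilter B)} (hU : IsOpen U) :
    ∀ x ∈ U, ∃ b : B, b ∈ x.carrier ∧ ∀ q : BAUltrafilter B, b ∈ q.carrier → q ∈ U := by
  have h : TopologicalSpace.GenerateOpen
      {U | ∃ b : B, U = {q : BAUltrafilter B | b ∈ q}} U := hU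
  clear hU
  induction h with
  | basic V hV =>
    obtain ⟨b, rfl⟩ := hV
    exact fun x hx => ⟨b, hx, fun q hq => hq⟩
  | univ => exact fun x _ => ⟨⊤, x.top_mem, fun q _ => trivial⟩
  | inter V W _ _ ihV ihW =>
    intro x hx
    obtain ⟨b, hbx, hb⟩ := ihV x hx.1
    obtain ⟨c, hcx, hc⟩ := ihW x hx.2
    exact ⟨b ⊓ c, x.inf_mem hbx hcx, fun q hq =>
      ⟨hb q (q.mem_of_le hq inf_le_left), hc q (q.mem_of_le hq inf_le_right)⟩⟩
  | sUnion S _ ih =>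
    intro x hx
    obtain ⟨V, hVS, hxV⟩ := hx
    obtain ⟨b, h1, h2⟩ := ih V hVS x hxV
    exact ⟨b, h1, fun q hq => ⟨V, hVS, h2 q hq⟩⟩

theorem notDense_char {Q : Set (BAUltrafilter B)} (h : ¬ Dense Q) :
    ∃ (b : B) (p : BAUltrafilter B), b ∈ p.carrier ∧ ∀ q ∈ Q, b ∉ q.carrier := by
  rw [dense_iff_inter_open] at h
  push_neg at h
  obtain ⟨U, hU, hUne, hUQ⟩ := h
  obtain ⟨x, hx⟩ := hUne
  obtain ⟨b, hbx, hb⟩ := stone_open_char hU x hx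
  refine ⟨b, x, hbx, fun q hq hbq => ?_⟩
  have hmem : q ∈ U ∩ Q := ⟨hb q hbq, hq⟩
  rw [hUQ] at hmem
  exact hmem

/-- The key step of the construction. -/
theorem step_lemma (lam : Cardinal.{u}) (hlam : ℵ₀ ≤ lam)
    (hnotdense : ∀ Q : Set (BAUltrafilter B), #Q < lam → ¬ Dense Q)
    (Q : Set (BAUltrafilter B)) (s : Set B) (hQ : #Q < lam) (hs : #s < lam) :
    ∃ x : B × BAUltrafilter B × BAUltrafilter B,
      x.1 ∈ x.2.2.carrier ∧ x.1 ∉ x.2.1.carrier ∧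
      (∀ c ∈ s, (c ∈ x.2.1.carrier ↔ c ∈ x.2.2.carrier)) ∧
      ∀ q ∈ Q, x.1 ∉ q.carrier := by
  classical
  set u : Set B := s ∪ compl '' s with hu
  set M : Set B := (fun t : Finset B => t.inf id) '' {t : Finset B | ↑t ⊆ u} with hMdef
  -- basic properties of M
  have htopM : ⊤ ∈ M := ⟨∅, by simp⟩
  have hsubM : u ⊆ M := fun c hc => ⟨{c}, by simpa using hc, by simp⟩
  have hinfM : ∀ ⦃m1 m2 : B⦄, m1 ∈ M → m2 ∈ M → m1 ⊓ m2 ∈ M := by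
    rintro _ _ ⟨t1, ht1, rfl⟩ ⟨t2, ht2, rfl⟩
    exact ⟨t1 ∪ t2, by simp [Set.union_subset_iff, Finset.coe_union] at *; exact ⟨ht1, ht2⟩,
      by simp [Finset.inf_union]⟩
  -- cardinality of M
  have hMcard : #M < lam := by
    have hMsub : M ⊆ Set.range (fun t' : Finset ↥u => (t'.image Subtype.val).inf id) := by
      rintro _ ⟨t, ht, rfl⟩
      refine ⟨t.subtype (· ∈ u), ?_⟩
      have : (t.subtype (· ∈ u)).image Subtype.val = t := by
        ext x
        simp only [Finset.mem_image, Finset.mem_subtype]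
        constructor
        · rintro ⟨⟨y, hy⟩, hyt, rfl⟩; exact hyt
        · intro hx; exact ⟨⟨x, ht hx⟩, hx, rfl⟩
      simp [this]
    have hM2 : #M ≤ #(Finset ↥u) := (mk_le_mk_of_subset hMsub).trans mk_range_le
    refine hM2.trans_lt ?_
    by_cases hfin : u.Finite
    · haveI := hfin.fintype
      exact (Cardinal.mk_lt_aleph0_iff.mpr inferInstance).trans_le hlam
    · haveI : Infinite ↥u := Set.infinite_coe_iff.mpr hfin
      rw [mk_finset_of_infinite]
      have : #↥u ≤ #s + #s :=
        (mk_union_le s (compl '' s)).trans (add_le_add le_rfl mk_image_le)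
      exact this.trans_lt (Cardinal.add_lt_of_lt hlam hs hs)
  -- choose witnessing ultrafilters
  let f : B → BAUltrafilter B := fun m => (exists_ultra_mem' m).choose
  have hf : ∀ m : B, m ≠ ⊥ → m ∈ (f m).carrier := fun m => (exists_ultra_mem' m).choose_spec
  set D : Set (BAUltrafilter B) := Q ∪ f '' M with hD
  have hDcard : #D < lam :=
    (mk_union_le Q (f '' M)).trans_lt
      (Cardinal.add_lt_of_lt hlam hQ (mk_image_le.trans_lt hMcard))
  obtain ⟨a, p1, hap1, havoid⟩ := notDense_char (hnotdense D hDcard)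
  -- the filter for p0
  set F : Set B := {y | ∃ m, m ∈ M ∧ m ∈ p1.carrier ∧ m ⊓ aᶜ ≤ y} with hF
  have hbotF : ⊥ ∉ F := by
    rintro ⟨m, hmM, hmp1, hm⟩
    have hmne : m ≠ ⊥ := fun h => p1.bot_not_mem (h ▸ hmp1)
    have hma : m ≤ a := by
      have h1 : m ⊓ aᶜ = ⊥ := le_antisymm hm bot_le
      have h2 : m ≤ aᶜᶜ := le_compl_iff_disjoint_right.mpr (disjoint_iff.mpr h1)
      rwa [compl_compl] at h2
    have : a ∈ (f m).carrier := (f m).mem_of_le (hf m hmne) hma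
    exact havoid (f m) (Or.inr ⟨m, hmM, rfl⟩) this
  obtain ⟨p0, hp0⟩ := exists_ultra_ext F
    ⟨⊤, htopM, p1.top_mem, le_top⟩ hbotF
    (by
      rintro x y ⟨m1, hm1M, hm1p, h1⟩ ⟨m2, hm2M, hm2p, h2⟩
      refine ⟨m1 ⊓ m2, hinfM hm1M hm2M, p1.inf_mem hm1p hm2p, ?_⟩
      calc m1 ⊓ m2 ⊓ aᶜ ≤ (m1 ⊓ aᶜ) ⊓ (m2 ⊓ aᶜ) := by
            refine le_inf (inf_le_inf_right _ inf_le_left) (inf_le_inf_right _ inf_le_right)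
        _ ≤ x ⊓ y := inf_le_inf h1 h2)
    (by rintro x y ⟨m, hmM, hmp, h1⟩ hxy; exact ⟨m, hmM, hmp, h1.trans hxy⟩)
  have hacp0 : aᶜ ∈ p0.carrier := hp0 ⟨⊤, htopM, p1.top_mem, by simp⟩
  refine ⟨(a, p0, p1), hap1, BAUltrafilter.not_mem_of_compl_mem hacp0, ?_, ?_⟩
  · intro c hc
    constructor
    · intro hc0
      by_contra hc1
      rcases p1.mem_or_compl_mem c with h | h
      · exact hc1 h
      · have : cᶜ ∈ p0.carrier := hp0 ⟨cᶜ, hsubM (Or.inr ⟨c, hc, rfl⟩), h, inf_le_left⟩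
        exact BAUltrafilter.not_mem_of_compl_mem this hc0
    · intro hc1
      exact hp0 ⟨c, hsubM (Or.inl hc), hc1, inf_le_left⟩
  · exact fun q hq => havoid q (Or.inl hq)

end Aux

section Rec

variable (B : Type u) [BooleanAlgebra B] [Nontrivial B]
  (lam : Cardinal.{u}) (hlam : ℵ₀ ≤ lam)
  (hnotdense : ∀ Q : Set (BAUltrafilter B), #Q < lam → ¬ Dense Q)

/-- One step of the transfinite construction, given all previous values. -/
noncomputable def seqStep (i : lam.ord.ToType)
    (g : {j : lam.ord.ToType // j < i} → B × BAUltrafilter B × BAUltrafilter B) :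
    B × BAUltrafilter B × BAUltrafilter B :=
  (step_lemma lam hlam hnotdense
    (Set.range (fun j => (g j).2.1) ∪ Set.range (fun j => (g j).2.2))
    (Set.range (fun j => (g j).1))
    ((mk_union_le _ _).trans_lt (Cardinal.add_lt_of_lt hlam
      (mk_range_le.trans_lt (Cardinal.mk_Iio_ord_toType i))
      (mk_range_le.trans_lt (Cardinal.mk_Iio_ord_toType i))))
    (mk_range_le.trans_lt (Cardinal.mk_Iio_ord_toType i))).choose

theorem seqStep_spec (i : lam.ord.ToType)
    (g : {j : lam.ord.ToType // j < i} → B × BAUltrafilter B × BAUltrafilter B) :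
    (seqStep B lam hlam hnotdense i g).1 ∈ (seqStep B lam hlam hnotdense i g).2.2.carrier ∧
    (seqStep B lam hlam hnotdense i g).1 ∉ (seqStep B lam hlam hnotdense i g).2.1.carrier ∧
    (∀ j, ((g j).1 ∈ (seqStep B lam hlam hnotdense i g).2.1.carrier ↔
      (g j).1 ∈ (seqStep B lam hlam hnotdense i g).2.2.carrier)) ∧
    (∀ j, (seqStep B lam hlam hnotdense i g).1 ∉ (g j).2.1.carrier ∧
      (seqStep B lam hlam hnotdense i g).1 ∉ (g j).2.2.carrier) := by
  obtain ⟨h1, h2, h3, h4⟩ := (step_lemma lam hlam hnotdense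
    (Set.range (fun j => (g j).2.1) ∪ Set.range (fun j => (g j).2.2))
    (Set.range (fun j => (g j).1))
    ((mk_union_le _ _).trans_lt (Cardinal.add_lt_of_lt hlam
      (mk_range_le.trans_lt (Cardinal.mk_Iio_ord_toType i))
      (mk_range_le.trans_lt (Cardinal.mk_Iio_ord_toType i))))
    (mk_range_le.trans_lt (Cardinal.mk_Iio_ord_toType i))).choose_spec
  refine ⟨h1, h2, fun j => h3 _ ⟨j, rfl⟩, fun j =>
    ⟨h4 _ (Or.inl ⟨j, rfl⟩), h4 _ (Or.inr ⟨j, rfl⟩)⟩⟩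

/-- The transfinite sequence. -/
noncomputable def seqF : lam.ord.ToType → B × BAUltrafilter B × BAUltrafilter B :=
  WellFounded.fix wellFounded_lt
    (fun i prev => seqStep B lam hlam hnotdense i (fun j => prev j.1 j.2))

theorem seqF_eq (i : lam.ord.ToType) :
    seqF B lam hlam hnotdense i =
      seqStep B lam hlam hnotdense i (fun j => seqF B lam hlam hnotdense j.1) :=
  WellFounded.fix_eq _ _ _

end Rec

/-- If `B` is an infinite Boolean algebra and `λ` an infinite
cardinal such that no set of ultrafilters of `B` of cardinality `< λ` is dense
in the Stone space, then there exist `a_i ∈ B` and ultrafilters `p⁰_i, p¹_i`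
of `B` for `i < λ` satisfying: (a) `a_i ∈ p¹_i` and `a_i ∉ p⁰_i`;
(b) for `j < i`, `a_j ∈ p⁰_i ↔ a_j ∈ p¹_i`;
(c) for `j < i`, `a_i ∉ p⁰_j` and `a_i ∉ p¹_j`. -/
theorem exists_separating_family (B : Type u) [BooleanAlgebra B] [Infinite B]
    (lam : Cardinal.{u}) (hlam : ℵ₀ ≤ lam)
    (hnotdense : ∀ Q : Set (BAUltrafilter B), #Q < lam → ¬ Dense Q) :
    ∃ (a : lam.ord.ToType → B) (p0 p1 : lam.ord.ToType → BAUltrafilter B),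
      (∀ i, a i ∈ p1 i ∧ a i ∉ p0 i) ∧
      (∀ j i, j < i → (a j ∈ p0 i ↔ a j ∈ p1 i)) ∧
      (∀ j i, j < i → a i ∉ p0 j ∧ a i ∉ p1 j) := by
  set F := seqF B lam hlam hnotdense with hFdef
  have key : ∀ i : lam.ord.ToType,
      (F i).1 ∈ (F i).2.2.carrier ∧ (F i).1 ∉ (F i).2.1.carrier ∧
      (∀ j : lam.ord.ToType, ∀ hj : j < i,
        ((F j).1 ∈ (F i).2.1.carrier ↔ (F j).1 ∈ (F i).2.2.carrier)) ∧
      (∀ j : lam.ord.ToType, ∀ hj : j < i,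
        (F i).1 ∉ (F j).2.1.carrier ∧ (F i).1 ∉ (F j).2.2.carrier) := by
    intro i
    have h := seqStep_spec B lam hlam hnotdense i (fun j => F j.1)
    rw [← seqF_eq] at h
    obtain ⟨h1, h2, h3, h4⟩ := h
    exact ⟨h1, h2, fun j hj => h3 ⟨j, hj⟩, fun j hj => h4 ⟨j, hj⟩⟩
  refine ⟨fun i => (F i).1, fun i => (F i).2.1, fun i => (F i).2.2, ?_, ?_, ?_⟩
  · exact fun i => ⟨(key i).1, (key i).2.1⟩
  · exact fun j i hj => (key i).2.2.1 j hj
  · exact fun j i hj => (key i).2.2.2 j hj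
end
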